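/- arXiv:1311.4296 — 8 statements merged into one kernel-verified Lean document; each statement's English description precedes it below -/
import Mathlib

section
/- Let F be a submodular function on V with F(∅) = 0, let x ∈ ℝ^V, and let σ be any permutation of V with x_{σ(1)} ≥ x_{σ(2)} ≥ ⋯ ≥ x_{σ(n)}. Define the greedy vector y ∈ ℝ^V by y_{σ(k)} = F({σ(1),…,σ(k)}) − F({σ(1),…,σ(k−1)}) for k = 1,…,n. Then y ∈ B(F) (in particular B(F) is nonempty), and ⟨y, x⟩ = max_{z ∈ B(F)} ⟨z, x⟩; consequently the Lovász extension satisfies f(x) = max_{z ∈ B(F)} ⟨z, x⟩. -/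
open Finset
open Finset

def Submodular {n : ℕ} (F : Finset (Fin n) → ℝ) : Prop :=
  ∀ S T : Finset (Fin n), F (S ∪ T) + F (S ∩ T) ≤ F S + F T

def basePolytope {n : ℕ} (F : Finset (Fin n) → ℝ) : Set (Fin n → ℝ) :=
  {y | (∀ S : Finset (Fin n), ∑ i ∈ S, y i ≤ F S) ∧ ∑ i, y i = F Finset.univ}

def SortsDesc {n : ℕ} (x : Fin n → ℝ) (σ : Equiv.Perm (Fin n)) : Prop :=
  ∀ j k : Fin n, j ≤ k → x (σ k) ≤ x (σ j)

def lovaszVal {n : ℕ} (F : Finset (Fin n) → ℝ) (x : Fin n → ℝ) (σ : Equiv.Perm (Fin n)) : ℝ :=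
  ∑ k : Fin n, x (σ k) *
    (F ((Finset.univ.filter (fun j => j ≤ k)).image ⇑σ)
      - F ((Finset.univ.filter (fun j => j < k)).image ⇑σ))

def IsLovasz {n : ℕ} (F : Finset (Fin n) → ℝ) (f : (Fin n → ℝ) → ℝ) : Prop :=
  ∀ (x : Fin n → ℝ) (σ : Equiv.Perm (Fin n)), SortsDesc x σ → f x = lovaszVal F x σ

/-- The greedy vector associated with a submodular function `F` and a sorting
permutation `σ`:  `y (σ k) = F({σ 0,…,σ k}) − F({σ 0,…,σ (k−1)})`. -/
def greedyVec {n : ℕ} (F : Finset (Fin n) → ℝ) (σ : Equiv.Perm (Fin n)) : Fin n → ℝ :=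
  fun i => F ((Finset.univ.filter (fun j => j ≤ σ.symm i)).image ⇑σ)
    - F ((Finset.univ.filter (fun j => j < σ.symm i)).image ⇑σ)

namespace GreedyAux

variable {n : ℕ} (σ : Equiv.Perm (Fin n))

/-- The prefix set `{σ 0, …, σ (k-1)}`. -/
def Pre (k : ℕ) : Finset (Fin n) :=
  (Finset.univ.filter fun j : Fin n => (j : ℕ) < k).image ⇑σ

lemma Pre_zero : Pre σ 0 = ∅ := by
  simp [Pre]

lemma Pre_of_le {k : ℕ} (h : n ≤ k) : Pre σ k = Finset.univ := by
  ext i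
  simp only [Pre, mem_image, mem_filter, mem_univ, true_and, iff_true]
  exact ⟨σ.symm i, lt_of_lt_of_le (σ.symm i).isLt h, σ.apply_symm_apply i⟩

lemma not_mem_Pre {m : ℕ} (h : m < n) : σ ⟨m, h⟩ ∉ Pre σ m := by
  simp only [Pre, mem_image, mem_filter, mem_univ, true_and, not_exists, not_and]
  intro j hj hje
  have hjm : j = ⟨m, h⟩ := σ.injective hje
  subst hjm
  exact absurd hj (lt_irrefl m)

lemma Pre_succ {m : ℕ} (h : m < n) :
    Pre σ (m + 1) = insert (σ ⟨m, h⟩) (Pre σ m) := by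
  ext i
  simp only [Pre, mem_image, mem_filter, mem_univ, true_and, mem_insert]
  constructor
  · rintro ⟨j, hj, rfl⟩
    rcases Nat.lt_succ_iff_lt_or_eq.mp hj with hj' | hj'
    · exact Or.inr ⟨j, hj', rfl⟩
    · exact Or.inl (by congr 1; exact Fin.ext hj')
  · rintro (rfl | ⟨j, hj, rfl⟩)
    · exact ⟨⟨m, h⟩, Nat.lt_succ_self m, rfl⟩
    · exact ⟨j, Nat.lt_succ_of_lt hj, rfl⟩

/-- Extension of a vector on `Fin n` to `ℕ` along `σ`. -/
def pext (z : Fin n → ℝ) (m : ℕ) : ℝ :=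
  if h : m < n then z (σ ⟨m, h⟩) else 0

lemma sum_Pre (z : Fin n → ℝ) (k : ℕ) :
    ∑ i ∈ Pre σ k, z i = ∑ m ∈ Finset.range k, pext σ z m := by
  induction k with
  | zero => simp [Pre_zero]
  | succ k ih =>
    rw [Finset.sum_range_succ, ← ih]
    by_cases h : k < n
    · rw [Pre_succ σ h, Finset.sum_insert (not_mem_Pre σ h)]
      rw [pext, dif_pos h]; ring
    · push_neg at h
      rw [Pre_of_le σ h, Pre_of_le σ (h.trans (Nat.le_succ k)), pext, dif_neg (by omega)]
      ring

variable (F : Finset (Fin n) → ℝ)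

lemma ext_greedy (m : ℕ) :
    pext σ (greedyVec F σ) m = F (Pre σ (m + 1)) - F (Pre σ m) := by
  by_cases h : m < n
  · rw [pext, dif_pos h]
    have h1 : (Finset.univ.filter fun j : Fin n => j ≤ σ.symm (σ ⟨m, h⟩)) =
        (Finset.univ.filter fun j : Fin n => (j : ℕ) < m + 1) := by
      ext j; simp [Equiv.symm_apply_apply, Fin.le_def, Nat.lt_succ_iff]
    have h2 : (Finset.univ.filter fun j : Fin n => j < σ.symm (σ ⟨m, h⟩)) =
        (Finset.univ.filter fun j : Fin n => (j : ℕ) < m) := by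
      ext j; simp [Equiv.symm_apply_apply, Fin.lt_def]
    rw [greedyVec, h1, h2]; rfl
  · push_neg at h
    rw [pext, dif_neg (by omega), Pre_of_le σ h, Pre_of_le σ (h.trans (Nat.le_succ m))]
    ring

lemma sum_Pre_greedy (hF0 : F ∅ = 0) (k : ℕ) :
    ∑ i ∈ Pre σ k, greedyVec F σ i = F (Pre σ k) := by
  rw [sum_Pre]
  calc ∑ m ∈ Finset.range k, pext σ (greedyVec F σ) m
      = ∑ m ∈ Finset.range k, (F (Pre σ (m + 1)) - F (Pre σ m)) :=
        Finset.sum_congr rfl fun m _ => ext_greedy σ F m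
    _ = F (Pre σ k) - F (Pre σ 0) := Finset.sum_range_sub (fun k => F (Pre σ k)) k
    _ = F (Pre σ k) := by rw [Pre_zero, hF0]; ring

lemma greedy_le (hF0 : F ∅ = 0) (hF : Submodular F) (S : Finset (Fin n)) :
    ∑ i ∈ S, greedyVec F σ i ≤ F S := by
  set w : Fin n → ℝ := fun i => if i ∈ S then greedyVec F σ i else 0 with hw
  have h1 : ∑ i ∈ S, greedyVec F σ i = ∑ i ∈ Pre σ n, w i := by
    rw [Pre_of_le σ le_rfl, hw]
    rw [Finset.sum_ite_mem, Finset.univ_inter]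
  have key : ∀ m ∈ Finset.range n,
      pext σ w m ≤ F (S ∩ Pre σ (m + 1)) - F (S ∩ Pre σ m) := by
    intro m hm
    have h : m < n := Finset.mem_range.mp hm
    rw [pext, dif_pos h, hw]
    set a := σ ⟨m, h⟩ with ha
    rw [Pre_succ σ h, ← ha]
    by_cases haS : a ∈ S
    · simp only [haS, if_pos]
      have key := hF (S ∩ insert a (Pre σ m)) (Pre σ m)
      have hU : (S ∩ insert a (Pre σ m)) ∪ Pre σ m = insert a (Pre σ m) := by
        ext i
        simp only [mem_union, mem_inter, mem_insert]
        constructor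
        · rintro (⟨_, hi⟩ | hiP)
          · exact hi
          · exact Or.inr hiP
        · rintro (rfl | hiP)
          · exact Or.inl ⟨haS, Or.inl rfl⟩
          · exact Or.inr hiP
      have hI : (S ∩ insert a (Pre σ m)) ∩ Pre σ m = S ∩ Pre σ m := by
        ext i
        simp only [mem_inter, mem_insert]
        tauto
      rw [hU, hI] at key
      have hy := ext_greedy σ F m
      rw [pext, dif_pos h, ← ha, Pre_succ σ h, ← ha] at hy
      rw [hy]
      linarith
    · simp only [haS, if_neg, not_false_iff]
      have hSP : S ∩ insert a (Pre σ m) = S ∩ Pre σ m := by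
        ext i
        simp only [mem_inter, mem_insert]
        constructor
        · rintro ⟨hiS, rfl | hiP⟩
          · exact absurd hiS haS
          · exact ⟨hiS, hiP⟩
        · rintro ⟨hiS, hiP⟩
          exact ⟨hiS, Or.inr hiP⟩
      rw [hSP]
      simp
  calc ∑ i ∈ S, greedyVec F σ i = ∑ m ∈ Finset.range n, pext σ w m := by
        rw [h1, sum_Pre]
    _ ≤ ∑ m ∈ Finset.range n, (F (S ∩ Pre σ (m + 1)) - F (S ∩ Pre σ m)) :=
        Finset.sum_le_sum key
    _ = F (S ∩ Pre σ n) - F (S ∩ Pre σ 0) :=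
        Finset.sum_range_sub (fun k => F (S ∩ Pre σ k)) n
    _ = F S := by rw [Pre_zero, Pre_of_le σ le_rfl, Finset.inter_univ,
        Finset.inter_empty, hF0]; ring

end GreedyAux

open GreedyAux in
/-- Edmonds' greedy algorithm: for a submodular `F` with `F ∅ = 0`,
any `x` and any permutation `σ` sorting `x` in decreasing order, the greedy vector
lies in the base polytope `B(F)`, its inner product with `x` equals the Lovász
extension value `f(x)`, and this value is the maximum of `⟨z, x⟩` over `z ∈ B(F)`. -/
theorem statement0 {n : ℕ} (F : Finset (Fin n) → ℝ) (hF0 : F ∅ = 0) (hF : Submodular F)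
    (x : Fin n → ℝ) (σ : Equiv.Perm (Fin n)) (hσ : SortsDesc x σ) :
    greedyVec F σ ∈ basePolytope F ∧
    (∑ i, greedyVec F σ i * x i) = lovaszVal F x σ ∧
    IsGreatest ((fun z : Fin n → ℝ => ∑ i, z i * x i) '' basePolytope F)
      (∑ i, greedyVec F σ i * x i) := by
  have hmem : greedyVec F σ ∈ basePolytope F := by
    refine ⟨greedy_le σ F hF0 hF, ?_⟩
    have := sum_Pre_greedy σ F hF0 n
    rw [Pre_of_le σ le_rfl] at this
    exact this
  have hval : (∑ i, greedyVec F σ i * x i) = lovaszVal F x σ := by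
    rw [lovaszVal, ← Equiv.sum_comp σ (fun i => greedyVec F σ i * x i)]
    refine Finset.sum_congr rfl fun k _ => ?_
    simp only [greedyVec, Equiv.symm_apply_apply]
    ring
  have hub : ∀ z ∈ basePolytope F, ∑ i, z i * x i ≤ ∑ i, greedyVec F σ i * x i := by
    intro z hz
    have hprod : ∀ z : Fin n → ℝ,
        ∑ i, z i * x i = ∑ m ∈ Finset.range n, pext σ z m * pext σ x m := by
      intro z
      have h1 : ∑ i, z i * x i = ∑ i ∈ Pre σ n, (fun i => z i * x i) i := by
        rw [Pre_of_le σ le_rfl]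
      rw [h1, sum_Pre]
      refine Finset.sum_congr rfl fun m hm => ?_
      have h : m < n := Finset.mem_range.mp hm
      simp [pext, dif_pos h]
    rw [hprod z, hprod (greedyVec F σ)]
    set f : ℕ → ℝ := pext σ x with hf
    set g : ℕ → ℝ := fun m => pext σ (greedyVec F σ) m - pext σ z m with hg
    have habel := Finset.sum_range_by_parts f g n
    have hD : ∀ k : ℕ, ∑ j ∈ Finset.range k, g j = F (Pre σ k) - ∑ i ∈ Pre σ k, z i := by
      intro k
      rw [hg, Finset.sum_sub_distrib, ← sum_Pre, ← sum_Pre, sum_Pre_greedy σ F hF0]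
    have hDn : ∑ j ∈ Finset.range n, g j = 0 := by
      rw [hD, Pre_of_le σ le_rfl, hz.2]; ring
    have hDpos : ∀ k : ℕ, 0 ≤ ∑ j ∈ Finset.range k, g j := by
      intro k
      rw [hD]
      linarith [hz.1 (Pre σ k)]
    have hgoal : 0 ≤ ∑ m ∈ Finset.range n, f m • g m := by
      rw [habel, hDn, smul_zero, zero_sub, neg_nonneg]
      apply Finset.sum_nonpos
      intro i hi
      have hi' : i + 1 < n := by
        have := Finset.mem_range.mp hi; omega
      have hfi : f (i + 1) ≤ f i := by
        rw [hf]
        simp only [pext, dif_pos hi', dif_pos (Nat.lt_of_succ_lt hi')]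
        exact hσ ⟨i, Nat.lt_of_succ_lt hi'⟩ ⟨i + 1, hi'⟩ (by simp [Fin.le_def])
      have := hDpos (i + 1)
      have : (f (i + 1) - f i) * (∑ j ∈ Finset.range (i + 1), g j) ≤ 0 :=
        mul_nonpos_of_nonpos_of_nonneg (by linarith) this
      simpa [smul_eq_mul] using this
    have : ∑ m ∈ Finset.range n, f m • g m =
        ∑ m ∈ Finset.range n, pext σ (greedyVec F σ) m * pext σ x m
          - ∑ m ∈ Finset.range n, pext σ z m * pext σ x m := by
      rw [← Finset.sum_sub_distrib]
      refine Finset.sum_congr rfl fun m _ => ?_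
      simp only [smul_eq_mul, hg, hf]
      ring
    linarith [hgoal, this ▸ hgoal]
  exact ⟨hmem, hval, ⟨⟨greedyVec F σ, hmem, rfl⟩, by rintro v ⟨z, hz, rfl⟩; exact hub z hz⟩⟩
end

section
/- If the set function F on V with F(∅) = 0 is submodular, then its Lovász extension f : ℝ^V → ℝ is a convex function. -/
open Finset
open Finset

namespace Statement1Aux

variable {n : ℕ}

/-- The prefix set of the first `m` elements in the order given by `σ`. -/
def P (σ : Equiv.Perm (Fin n)) (m : ℕ) : Finset (Fin n) :=
  (Finset.univ.filter (fun j : Fin n => (j : ℕ) < m)).image σ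

lemma mem_P {σ : Equiv.Perm (Fin n)} {m : ℕ} {i : Fin n} :
    i ∈ P σ m ↔ (σ.symm i : ℕ) < m := by
  simp only [P, Finset.mem_image, Finset.mem_filter, Finset.mem_univ, true_and]
  constructor
  · rintro ⟨j, hj, rfl⟩; simpa using hj
  · intro h; exact ⟨σ.symm i, h, by simp⟩

lemma P_zero (σ : Equiv.Perm (Fin n)) : P σ 0 = ∅ := by
  ext i; simp [mem_P]

lemma P_top (σ : Equiv.Perm (Fin n)) : P σ n = Finset.univ := by
  ext i; simp [mem_P, (σ.symm i).isLt]

lemma P_succ (σ : Equiv.Perm (Fin n)) (k : Fin n) :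
    P σ ((k : ℕ) + 1) = insert (σ k) (P σ (k : ℕ)) := by
  ext i
  simp only [mem_P, Finset.mem_insert, Nat.lt_succ_iff_lt_or_eq]
  constructor
  · rintro (h | h)
    · exact Or.inr h
    · exact Or.inl ((Equiv.symm_apply_eq σ).mp (Fin.ext h))
  · rintro (rfl | h)
    · right; simp
    · exact Or.inl h

lemma not_mem_P (σ : Equiv.Perm (Fin n)) (k : Fin n) : σ k ∉ P σ (k : ℕ) := by
  simp [mem_P]

/-- The greedy vector associated to `σ`. -/
def gy (F : Finset (Fin n) → ℝ) (σ : Equiv.Perm (Fin n)) : Fin n → ℝ :=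
  fun i => F (P σ ((σ.symm i : ℕ) + 1)) - F (P σ ((σ.symm i : ℕ)))

lemma gy_apply (F : Finset (Fin n) → ℝ) (σ : Equiv.Perm (Fin n)) (k : Fin n) :
    gy F σ (σ k) = F (P σ ((k : ℕ) + 1)) - F (P σ (k : ℕ)) := by
  simp [gy]

lemma lovasz_eq (F : Finset (Fin n) → ℝ) (x : Fin n → ℝ) (σ : Equiv.Perm (Fin n)) :
    lovaszVal F x σ = ∑ k : Fin n, x (σ k) * (F (P σ ((k : ℕ) + 1)) - F (P σ (k : ℕ))) := by
  unfold lovaszVal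
  refine Finset.sum_congr rfl fun k _ => ?_
  have e1 : (Finset.univ.filter (fun j => j ≤ k)).image ⇑σ = P σ ((k : ℕ) + 1) := by
    unfold P; congr 1; ext j
    simp only [Finset.mem_filter, Finset.mem_univ, true_and, Fin.le_def]
    omega
  have e2 : (Finset.univ.filter (fun j => j < k)).image ⇑σ = P σ (k : ℕ) := by
    unfold P; congr 1
  rw [e1, e2]

/-- Rewriting a sum over a prefix set as a sum over an initial segment of `ℕ`. -/
lemma sum_P (σ : Equiv.Perm (Fin n)) (y : Fin n → ℝ) {m : ℕ} (hm : m ≤ n) :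
    ∑ i ∈ P σ m, y i =
      ∑ j ∈ Finset.range m, (if h : j < n then y (σ ⟨j, h⟩) else 0) := by
  rw [P, Finset.sum_image (by intro a _ b _ h; exact σ.injective h), Finset.sum_filter]
  calc ∑ k : Fin n, (if (k : ℕ) < m then y (σ k) else 0)
      = ∑ k : Fin n, (fun j => if j < m then (if h : j < n then y (σ ⟨j, h⟩) else 0) else 0)
          (k : ℕ) := Finset.sum_congr rfl fun k _ => by
            by_cases hk : (k : ℕ) < m <;> simp [hk, k.isLt]
    _ = ∑ j ∈ Finset.range n,
          (if j < m then (if h : j < n then y (σ ⟨j, h⟩) else 0) else 0) :=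
        Fin.sum_univ_eq_sum_range
          (fun j => if j < m then (if h : j < n then y (σ ⟨j, h⟩) else 0) else 0) n
    _ = ∑ j ∈ Finset.range m, (if h : j < n then y (σ ⟨j, h⟩) else 0) := by
        rw [← Finset.sum_filter]
        congr 1
        ext j
        simp only [Finset.mem_filter, Finset.mem_range]
        omega

lemma telescope (G : ℕ → ℝ) :
    ∑ k : Fin n, (G ((k : ℕ) + 1) - G (k : ℕ)) = G n - G 0 := by
  rw [Fin.sum_univ_eq_sum_range (fun m => G (m + 1) - G m), Finset.sum_range_sub]

lemma greedy_mem (F : Finset (Fin n) → ℝ) (hF0 : F ∅ = 0) (hF : Submodular F)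
    (σ : Equiv.Perm (Fin n)) : gy F σ ∈ basePolytope F := by
  constructor
  · intro S
    have h1 : ∑ i ∈ S, gy F σ i = ∑ k : Fin n, (if σ k ∈ S then gy F σ (σ k) else 0) := by
      rw [Equiv.sum_comp σ (fun i => if i ∈ S then gy F σ i else 0), Finset.sum_ite_mem,
        Finset.univ_inter]
    rw [h1]
    have h2 : ∀ k : Fin n, (if σ k ∈ S then gy F σ (σ k) else 0) ≤
        F (S ∩ P σ ((k : ℕ) + 1)) - F (S ∩ P σ (k : ℕ)) := by
      intro k
      by_cases hk : σ k ∈ S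
      · rw [if_pos hk, gy_apply]
        have hU : P σ (k : ℕ) ∪ (S ∩ P σ ((k : ℕ) + 1)) = P σ ((k : ℕ) + 1) := by
          ext i
          simp only [Finset.mem_union, Finset.mem_inter, P_succ, Finset.mem_insert]
          constructor
          · rintro (h | ⟨h1, h2⟩)
            · exact Or.inr h
            · exact h2
          · rintro (rfl | h)
            · exact Or.inr ⟨hk, Or.inl rfl⟩
            · exact Or.inl h
        have hI : P σ (k : ℕ) ∩ (S ∩ P σ ((k : ℕ) + 1)) = S ∩ P σ (k : ℕ) := by
          ext i
          simp only [Finset.mem_inter, P_succ, Finset.mem_insert]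
          constructor
          · rintro ⟨h1, h2, _⟩; exact ⟨h2, h1⟩
          · rintro ⟨h1, h2⟩; exact ⟨h2, h1, Or.inr h2⟩
        have := hF (P σ (k : ℕ)) (S ∩ P σ ((k : ℕ) + 1))
        rw [hU, hI] at this
        linarith
      · rw [if_neg hk]
        have : S ∩ P σ ((k : ℕ) + 1) = S ∩ P σ (k : ℕ) := by
          ext i
          simp only [Finset.mem_inter, P_succ, Finset.mem_insert]
          constructor
          · rintro ⟨h1, rfl | h2⟩
            · exact absurd h1 hk
            · exact ⟨h1, h2⟩
          · rintro ⟨h1, h2⟩; exact ⟨h1, Or.inr h2⟩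
        rw [this]
        simp
    calc ∑ k : Fin n, (if σ k ∈ S then gy F σ (σ k) else 0)
        ≤ ∑ k : Fin n, (F (S ∩ P σ ((k : ℕ) + 1)) - F (S ∩ P σ (k : ℕ))) :=
          Finset.sum_le_sum fun k _ => h2 k
      _ = F (S ∩ P σ n) - F (S ∩ P σ 0) := telescope (fun m => F (S ∩ P σ m))
      _ = F S := by rw [P_top, P_zero, Finset.inter_univ, Finset.inter_empty, hF0, sub_zero]
  · have : ∑ i, gy F σ i = ∑ k : Fin n, gy F σ (σ k) := (Equiv.sum_comp σ (gy F σ)).symm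
    rw [this]
    have : ∑ k : Fin n, gy F σ (σ k) =
        ∑ k : Fin n, (F (P σ ((k : ℕ) + 1)) - F (P σ (k : ℕ))) :=
      Finset.sum_congr rfl fun k _ => gy_apply F σ k
    rw [this, telescope (fun m => F (P σ m)), P_top, P_zero, hF0, sub_zero]

/-- The key inequality: the pairing of `x` with any point of the base polytope is bounded
by the Lovász value along any permutation sorting `x` descending. -/
lemma inner_le (F : Finset (Fin n) → ℝ) (hF0 : F ∅ = 0) (x y : Fin n → ℝ)
    (hy : y ∈ basePolytope F) (τ : Equiv.Perm (Fin n)) (hτ : SortsDesc x τ) :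
    ∑ i, x i * y i ≤ lovaszVal F x τ := by
  set a : ℕ → ℝ := fun j => if h : j < n then x (τ ⟨j, h⟩) else 0 with ha
  set b : ℕ → ℝ := fun j => if h : j < n then y (τ ⟨j, h⟩) else 0 with hb
  set g : ℕ → ℝ := fun j => F (P τ (j + 1)) - F (P τ j) with hg
  have hB : ∀ m : ℕ, m ≤ n → ∑ j ∈ Finset.range m, b j = ∑ i ∈ P τ m, y i := by
    intro m hm; rw [sum_P τ y hm]
  have hGsum : ∀ m : ℕ, ∑ j ∈ Finset.range m, g j = F (P τ m) - F (P τ 0) :=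
    fun m => Finset.sum_range_sub (fun j => F (P τ j)) m
  have hLHS : ∑ i, x i * y i = ∑ j ∈ Finset.range n, a j * b j := by
    rw [← Equiv.sum_comp τ (fun i => x i * y i)]
    calc ∑ k : Fin n, x (τ k) * y (τ k)
        = ∑ k : Fin n, (fun j => a j * b j) (k : ℕ) :=
          Finset.sum_congr rfl fun k _ => by simp [ha, hb, k.isLt]
      _ = ∑ j ∈ Finset.range n, a j * b j := Fin.sum_univ_eq_sum_range (fun j => a j * b j) n
  have hRHS : lovaszVal F x τ = ∑ j ∈ Finset.range n, a j * g j := by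
    rw [lovasz_eq]
    calc ∑ k : Fin n, x (τ k) * (F (P τ ((k : ℕ) + 1)) - F (P τ (k : ℕ)))
        = ∑ k : Fin n, (fun j => a j * g j) (k : ℕ) :=
          Finset.sum_congr rfl fun k _ => by simp [ha, hg, k.isLt]
      _ = ∑ j ∈ Finset.range n, a j * g j := Fin.sum_univ_eq_sum_range (fun j => a j * g j) n
  rw [hLHS, hRHS]
  have hab := Finset.sum_range_by_parts a b n
  have hag := Finset.sum_range_by_parts a g n
  simp only [smul_eq_mul] at hab hag
  rw [hab, hag]
  have hBn : ∑ j ∈ Finset.range n, b j = F Finset.univ := by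
    rw [hB n le_rfl, P_top]; exact hy.2
  have hGn : ∑ j ∈ Finset.range n, g j = F Finset.univ := by
    rw [hGsum, P_top, P_zero, hF0, sub_zero]
  rw [hBn, hGn]
  refine sub_le_sub_left (Finset.sum_le_sum fun i hi => ?_) _
  rw [Finset.mem_range] at hi
  have hi1 : i + 1 < n := by omega
  have hΔ : a (i + 1) - a i ≤ 0 := by
    have h1 : a (i + 1) = x (τ ⟨i + 1, hi1⟩) := by simp [ha, hi1]
    have h2 : a i = x (τ ⟨i, by omega⟩) := by simp [ha, show i < n by omega]
    rw [h1, h2]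
    have := hτ ⟨i, by omega⟩ ⟨i + 1, hi1⟩ (by simp [Fin.le_def])
    linarith
  have hYF : ∑ j ∈ Finset.range (i + 1), b j ≤ ∑ j ∈ Finset.range (i + 1), g j := by
    rw [hB (i + 1) (by omega), hGsum, P_zero, hF0, sub_zero]
    exact hy.1 _
  exact mul_le_mul_of_nonpos_left hYF hΔ

lemma lovasz_eq_inner (F : Finset (Fin n) → ℝ) (x : Fin n → ℝ) (σ : Equiv.Perm (Fin n)) :
    lovaszVal F x σ = ∑ i, x i * gy F σ i := by
  rw [lovasz_eq, ← Equiv.sum_comp σ (fun i => x i * gy F σ i)]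
  exact Finset.sum_congr rfl fun k _ => by rw [gy_apply]

lemma key (F : Finset (Fin n) → ℝ) (hF0 : F ∅ = 0) (hF : Submodular F) (x : Fin n → ℝ)
    (σ τ : Equiv.Perm (Fin n)) (hτ : SortsDesc x τ) :
    lovaszVal F x σ ≤ lovaszVal F x τ := by
  rw [lovasz_eq_inner]
  exact inner_le F hF0 x (gy F σ) (greedy_mem F hF0 hF σ) τ hτ

lemma exists_sort (x : Fin n → ℝ) : ∃ τ : Equiv.Perm (Fin n), SortsDesc x τ := by
  refine ⟨Tuple.sort (fun i => -x i), fun j k hjk => ?_⟩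
  have := Tuple.monotone_sort (fun i => -x i) hjk
  simp only [Function.comp_apply] at this
  linarith

end Statement1Aux

/-- the Lovász extension of a submodular function (vanishing at ∅)
is a convex function on ℝ^V. -/
theorem statement1 {n : ℕ} (F : Finset (Fin n) → ℝ) (hF0 : F ∅ = 0) (hF : Submodular F)
    (f : (Fin n → ℝ) → ℝ) (hf : IsLovasz F f) :
    ConvexOn ℝ (Set.univ : Set (Fin n → ℝ)) f := by
  refine ⟨convex_univ, ?_⟩
  intro x _ y _ a b ha hb hab
  obtain ⟨τ, hτ⟩ := Statement1Aux.exists_sort (a • x + b • y)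
  obtain ⟨σx, hσx⟩ := Statement1Aux.exists_sort x
  obtain ⟨σy, hσy⟩ := Statement1Aux.exists_sort y
  rw [hf _ _ hτ, hf _ _ hσx, hf _ _ hσy]
  have hlin : lovaszVal F (a • x + b • y) τ =
      a * lovaszVal F x τ + b * lovaszVal F y τ := by
    unfold lovaszVal
    rw [Finset.mul_sum, Finset.mul_sum, ← Finset.sum_add_distrib]
    refine Finset.sum_congr rfl fun k _ => ?_
    simp only [Pi.add_apply, Pi.smul_apply, smul_eq_mul]
    ring
  rw [hlin]
  have h1 : lovaszVal F x τ ≤ lovaszVal F x σx :=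
    Statement1Aux.key F hF0 hF x τ σx hσx
  have h2 : lovaszVal F y τ ≤ lovaszVal F y σy :=
    Statement1Aux.key F hF0 hF y τ σy hσy
  have := add_le_add (mul_le_mul_of_nonneg_left h1 ha) (mul_le_mul_of_nonneg_left h2 hb)
  simpa [smul_eq_mul] using this
end

section
/- Let F be a submodular function on V with F(∅) = 0 and f its Lovász extension. Then min_{S ⊆ V} F(S) = min_{x ∈ [0,1]^V} f(x). Moreover, for every x ∈ [0,1]^V there exists a threshold θ ∈ (0,1] such that the level set S_θ = {i ∈ V : x_i ≥ θ} satisfies F(S_θ) ≤ f(x). -/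
open Finset
open Finset

namespace Stmt2Aux

variable {n : ℕ}

noncomputable def X (x : Fin n → ℝ) (σ : Equiv.Perm (Fin n)) (k : ℕ) : ℝ :=
  if h : k < n then x (σ ⟨k, h⟩) else 0

noncomputable def g (F : Finset (Fin n) → ℝ) (σ : Equiv.Perm (Fin n)) (k : ℕ) : ℝ :=
  F ((Finset.univ.filter (fun j : Fin n => (j : ℕ) < k)).image ⇑σ)

lemma exists_sortsDesc (x : Fin n → ℝ) : ∃ σ, SortsDesc x σ := by
  refine ⟨Tuple.sort (fun i => -x i), fun j k hjk => ?_⟩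
  have := Tuple.monotone_sort (fun i => -x i) hjk
  simpa using this

lemma lovasz_eq0 (F : Finset (Fin n) → ℝ) (x : Fin n → ℝ) (σ : Equiv.Perm (Fin n)) :
    lovaszVal F x σ = ∑ k ∈ Finset.range n, X x σ k * (g F σ (k + 1) - g F σ k) := by
  rw [lovaszVal, ← Fin.sum_univ_eq_sum_range (fun k => X x σ k * (g F σ (k + 1) - g F σ k)) n]
  refine Finset.sum_congr rfl fun k _ => ?_
  have h1 : X x σ (k : ℕ) = x (σ k) := by rw [X, dif_pos k.isLt]
  have h2 : (Finset.univ.filter (fun j : Fin n => (j : ℕ) < (k : ℕ) + 1)).image ⇑σ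
      = (Finset.univ.filter (fun j => j ≤ k)).image ⇑σ := by
    congr 1
    ext j
    simp only [Finset.mem_filter, Finset.mem_univ, true_and, Fin.le_def]
    omega
  have h3 : (Finset.univ.filter (fun j : Fin n => (j : ℕ) < (k : ℕ))).image ⇑σ
      = (Finset.univ.filter (fun j => j < k)).image ⇑σ := by
    rfl
  rw [h1, g, g, h2, h3]

lemma lovasz_eq (F : Finset (Fin n) → ℝ) (hF0 : F ∅ = 0) (x : Fin n → ℝ)
    (σ : Equiv.Perm (Fin n)) :
    lovaszVal F x σ = ∑ k ∈ Finset.range n, (X x σ k - X x σ (k + 1)) * g F σ (k + 1) := by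
  have hXn : X x σ n = 0 := dif_neg (lt_irrefl n)
  have hg0 : g F σ 0 = 0 := by
    rw [g]
    have : (Finset.univ.filter (fun j : Fin n => (j : ℕ) < 0)) = ∅ := by
      ext j; simp
    rw [this]
    simpa using hF0
  have key : ∑ k ∈ Finset.range n, X x σ k * g F σ k
      = ∑ k ∈ Finset.range n, X x σ (k + 1) * g F σ (k + 1) := by
    have h1 := Finset.sum_range_succ (fun k => X x σ k * g F σ k) n
    have h2 := Finset.sum_range_succ' (fun k => X x σ k * g F σ k) n
    simp only [hXn, hg0, mul_zero, zero_mul, add_zero] at h1 h2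
    linarith [h1.symm.trans h2]
  rw [lovasz_eq0]
  simp only [mul_sub, sub_mul, Finset.sum_sub_distrib, key]

lemma X_nonneg (x : Fin n → ℝ) (σ : Equiv.Perm (Fin n)) (hx : ∀ i, x i ∈ Set.Icc (0:ℝ) 1)
    (k : ℕ) : 0 ≤ X x σ k := by
  rw [X]; split
  · exact (hx _).1
  · exact le_rfl

lemma X_le_one (x : Fin n → ℝ) (σ : Equiv.Perm (Fin n)) (hx : ∀ i, x i ∈ Set.Icc (0:ℝ) 1)
    (k : ℕ) : X x σ k ≤ 1 := by
  rw [X]; split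
  · exact (hx _).2
  · norm_num

lemma X_antitone (x : Fin n → ℝ) (σ : Equiv.Perm (Fin n)) (hs : SortsDesc x σ)
    (hx : ∀ i, x i ∈ Set.Icc (0:ℝ) 1) (k : ℕ) : X x σ (k + 1) ≤ X x σ k := by
  rw [X, X]
  split
  · next h =>
    rw [dif_pos (Nat.lt_of_succ_lt h)]
    exact hs ⟨k, Nat.lt_of_succ_lt h⟩ ⟨k + 1, h⟩ (by simp [Fin.le_def])
  · split
    · exact (hx _).1
    · exact le_rfl


lemma level_set (x : Fin n → ℝ) (σ : Equiv.Perm (Fin n)) (hs : SortsDesc x σ)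
    (hx : ∀ i, x i ∈ Set.Icc (0:ℝ) 1) (k : ℕ) (hk : k < n)
    (hd : X x σ (k + 1) < X x σ k) :
    X x σ k ∈ Set.Ioc (0:ℝ) 1 ∧
      Finset.univ.filter (fun i => X x σ k ≤ x i)
        = (Finset.univ.filter (fun j : Fin n => (j : ℕ) < k + 1)).image ⇑σ := by
  have hXk : X x σ k = x (σ ⟨k, hk⟩) := dif_pos hk
  refine ⟨⟨lt_of_le_of_lt (X_nonneg x σ hx (k + 1)) hd, hXk ▸ (hx _).2⟩, ?_⟩
  ext i
  simp only [Finset.mem_filter, Finset.mem_univ, true_and, Finset.mem_image]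
  constructor
  · intro hi
    refine ⟨σ⁻¹ i, ?_, by simp⟩
    by_contra hj
    have hj' : k + 1 ≤ (σ⁻¹ i : ℕ) := by omega
    have hk1 : k + 1 < n := lt_of_le_of_lt hj' (σ⁻¹ i).isLt
    have h1 : x (σ (σ⁻¹ i)) ≤ x (σ ⟨k + 1, hk1⟩) :=
      hs ⟨k + 1, hk1⟩ (σ⁻¹ i) (by simpa [Fin.le_def] using hj')
    simp only [← Equiv.Perm.mul_apply, mul_inv_cancel, Equiv.Perm.one_apply] at h1
    have h2 : X x σ (k + 1) = x (σ ⟨k + 1, hk1⟩) := dif_pos hk1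
    rw [hXk] at hd hi
    rw [h2] at hd
    linarith
  · rintro ⟨j, hj, rfl⟩
    rw [hXk]
    exact hs j ⟨k, hk⟩ (by simp [Fin.le_def]; omega)

lemma threshold (F : Finset (Fin n) → ℝ) (hF0 : F ∅ = 0) (x : Fin n → ℝ)
    (σ : Equiv.Perm (Fin n)) (hs : SortsDesc x σ) (hx : ∀ i, x i ∈ Set.Icc (0:ℝ) 1) :
    ∃ θ ∈ Set.Ioc (0:ℝ) 1,
      F (Finset.univ.filter (fun i => θ ≤ x i)) ≤ lovaszVal F x σ := by
  classical
  set d : ℕ → ℝ := fun k => X x σ k - X x σ (k + 1) with hd_def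
  have hd : ∀ k, 0 ≤ d k := fun k => sub_nonneg.2 (X_antitone x σ hs hx k)
  have hsum : ∑ k ∈ Finset.range n, d k = X x σ 0 := by
    rw [hd_def]
    rw [Finset.sum_range_sub' (fun k => X x σ k) n]
    simp [X]
  have hval : lovaszVal F x σ = ∑ k ∈ Finset.range n, d k * g F σ (k + 1) :=
    lovasz_eq F hF0 x σ
  have hempty : X x σ 0 < 1 → Finset.univ.filter (fun i => (1:ℝ) ≤ x i) = ∅ := by
    intro h
    ext i
    simp only [Finset.mem_filter, Finset.mem_univ, true_and, Finset.notMem_empty,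
      iff_false, not_le]
    have hn : 0 < n := i.pos
    have h1 : x (σ (σ⁻¹ i)) ≤ x (σ ⟨0, hn⟩) := hs ⟨0, hn⟩ (σ⁻¹ i) (by simp [Fin.le_def])
    simp only [← Equiv.Perm.mul_apply, mul_inv_cancel, Equiv.Perm.one_apply] at h1
    have h2 : X x σ 0 = x (σ ⟨0, hn⟩) := dif_pos hn
    linarith
  set T := (Finset.range n).filter (fun k => 0 < d k) with hT_def
  by_cases hT : T.Nonempty
  · obtain ⟨k₀, hk₀T, hmin⟩ := T.exists_min_image (fun k => g F σ (k + 1)) hT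
    have hk₀ : k₀ ∈ Finset.range n ∧ 0 < d k₀ := by
      simpa [hT_def] using hk₀T
    obtain ⟨hθ, hset⟩ := level_set x σ hs hx k₀ (Finset.mem_range.1 hk₀.1)
      (by have := hk₀.2; change 0 < X x σ k₀ - X x σ (k₀ + 1) at this; linarith)
    have hineq : X x σ 0 * g F σ (k₀ + 1) ≤ lovaszVal F x σ := by
      rw [hval, ← hsum, Finset.sum_mul]
      refine Finset.sum_le_sum fun k hk => ?_
      rcases (hd k).lt_or_eq with h | h
      · exact mul_le_mul_of_nonneg_left
          (hmin k (by simp [hT_def, Finset.mem_filter, hk, h])) (hd k)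
      · rw [← h, zero_mul, zero_mul]
    have hX0nn : 0 ≤ X x σ 0 := X_nonneg x σ hx 0
    have hX0le : X x σ 0 ≤ 1 := X_le_one x σ hx 0
    by_cases hg : g F σ (k₀ + 1) ≤ 0
    · refine ⟨X x σ k₀, hθ, ?_⟩
      rw [hset]
      have : g F σ (k₀ + 1) ≤ X x σ 0 * g F σ (k₀ + 1) := by nlinarith
      exact this.trans hineq
    · push_neg at hg
      by_cases hX0 : X x σ 0 = 1
      · refine ⟨X x σ k₀, hθ, ?_⟩
        rw [hset]
        calc g F σ (k₀ + 1) = X x σ 0 * g F σ (k₀ + 1) := by rw [hX0, one_mul]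
          _ ≤ _ := hineq
      · refine ⟨1, ⟨one_pos, le_refl 1⟩, ?_⟩
        rw [hempty (lt_of_le_of_ne hX0le hX0), hF0]
        nlinarith
  · have hzero : ∀ k ∈ Finset.range n, d k = 0 := by
      intro k hk
      by_contra h
      exact hT ⟨k, by simp [hT_def, Finset.mem_filter, hk, lt_of_le_of_ne (hd k) (Ne.symm h)]⟩
    have hval0 : lovaszVal F x σ = 0 := by
      rw [hval]
      exact Finset.sum_eq_zero fun k hk => by rw [hzero k hk, zero_mul]
    have hX00 : X x σ 0 = 0 := by
      rw [← hsum]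
      exact Finset.sum_eq_zero hzero
    refine ⟨1, ⟨one_pos, le_refl 1⟩, ?_⟩
    rw [hempty (by rw [hX00]; norm_num), hF0, hval0]


lemma g_zero (F : Finset (Fin n) → ℝ) (hF0 : F ∅ = 0) (σ : Equiv.Perm (Fin n)) :
    g F σ 0 = 0 := by
  rw [g]
  have : (Finset.univ.filter (fun j : Fin n => (j : ℕ) < 0)) = ∅ := by ext j; simp
  rw [this]
  simpa using hF0

lemma lovasz_indicator (F : Finset (Fin n) → ℝ) (hF0 : F ∅ = 0) (S : Finset (Fin n))
    (σ : Equiv.Perm (Fin n))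
    (hs : SortsDesc (fun i => if i ∈ S then (1:ℝ) else 0) σ) :
    lovaszVal F (fun i => if i ∈ S then (1:ℝ) else 0) σ = F S := by
  classical
  set x : Fin n → ℝ := fun i => if i ∈ S then (1:ℝ) else 0 with hx_def
  set c := S.card with hc_def
  have hcn : c ≤ n := by simpa using Finset.card_le_univ S
  set U := Finset.univ.filter (fun j : Fin n => σ j ∈ S) with hU_def
  have hUcard : U.card = c := by
    have himg : U.image ⇑σ = S := by
      ext i
      simp only [hU_def, Finset.mem_image, Finset.mem_filter, Finset.mem_univ, true_and]
      constructor
      · rintro ⟨j, hj, rfl⟩; exact hj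
      · intro hi; exact ⟨σ⁻¹ i, by simpa using hi, by simp⟩
    rw [hc_def, ← himg, Finset.card_image_of_injective _ σ.injective]
  have hxval : ∀ j : Fin n, x (σ j) = if σ j ∈ S then (1:ℝ) else 0 := fun j => rfl
  have hdown : ∀ j k : Fin n, j ≤ k → k ∈ U → j ∈ U := by
    intro j k hjk hk
    simp only [hU_def, Finset.mem_filter, Finset.mem_univ, true_and] at hk ⊢
    have h1 := hs j k hjk
    by_contra hns
    rw [hxval, hxval, if_pos hk, if_neg hns] at h1
    linarith
  have hUiff : ∀ k : Fin n, k ∈ U ↔ (k : ℕ) < c := by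
    intro k
    constructor
    · intro hk
      have hsub : Finset.Iic k ⊆ U := fun j hj => hdown j k (Finset.mem_Iic.1 hj) hk
      have h := Finset.card_le_card hsub
      rw [Fin.card_Iic, hUcard] at h
      omega
    · intro hk
      by_contra hkU
      have hsub : U ⊆ Finset.Iio k := by
        intro j hj
        rw [Finset.mem_Iio]
        by_contra hjk
        exact hkU (hdown k j (le_of_not_gt hjk) hj)
      have h := Finset.card_le_card hsub
      rw [Fin.card_Iio, hUcard] at h
      omega
  have hXeq : ∀ k : ℕ, X x σ k = if k < c then 1 else 0 := by
    intro k
    rw [X]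
    by_cases h : k < n
    · rw [dif_pos h, hxval]
      have hiff := hUiff ⟨k, h⟩
      simp only [hU_def, Finset.mem_filter, Finset.mem_univ, true_and] at hiff
      by_cases hm : σ ⟨k, h⟩ ∈ S
      · rw [if_pos hm, if_pos (hiff.1 hm)]
      · rw [if_neg hm, if_neg (fun hck => hm (hiff.2 hck))]
    · rw [dif_neg h, if_neg (by omega)]
  rw [lovasz_eq0]
  have h1 : ∀ k ∈ Finset.range n, X x σ k * (g F σ (k + 1) - g F σ k)
      = if k < c then g F σ (k + 1) - g F σ k else 0 := by
    intro k _
    rw [hXeq k]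
    split <;> simp
  rw [Finset.sum_congr rfl h1, ← Finset.sum_filter]
  have h2 : (Finset.range n).filter (fun k => k < c) = Finset.range c := by
    ext k
    simp only [Finset.mem_filter, Finset.mem_range]
    omega
  rw [h2, Finset.sum_range_sub (fun k => g F σ k) c, g_zero F hF0 σ, sub_zero, g]
  congr 1
  ext i
  simp only [Finset.mem_image, Finset.mem_filter, Finset.mem_univ, true_and]
  constructor
  · rintro ⟨j, hj, rfl⟩
    have := (hUiff j).2 hj
    simpa [hU_def] using this
  · intro hi
    refine ⟨σ⁻¹ i, ?_, by simp⟩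
    exact (hUiff (σ⁻¹ i)).1 (by simp [hU_def, hi])

end Stmt2Aux

/-- for submodular `F` with `F ∅ = 0` and Lovász extension `f`,
the minimum of `F` over all subsets equals the minimum of `f` over `[0,1]^V`
(both minima being attained), and for every `x ∈ [0,1]^V` there is a threshold
`θ ∈ (0,1]` whose level set `{i : x i ≥ θ}` satisfies `F(S_θ) ≤ f(x)`. -/
theorem statement2 {n : ℕ} (F : Finset (Fin n) → ℝ) (hF0 : F ∅ = 0) (hF : Submodular F)
    (f : (Fin n → ℝ) → ℝ) (hf : IsLovasz F f) :
    (∃ m : ℝ, IsLeast (Set.range F) m ∧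
      IsLeast (f '' {x : Fin n → ℝ | ∀ i, x i ∈ Set.Icc (0:ℝ) 1}) m) ∧
    ∀ x : Fin n → ℝ, (∀ i, x i ∈ Set.Icc (0:ℝ) 1) →
      ∃ θ ∈ Set.Ioc (0:ℝ) 1, F (Finset.univ.filter (fun i => θ ≤ x i)) ≤ f x := by
  classical
  obtain ⟨S₀, -, hS₀⟩ := Finset.exists_min_image (Finset.univ : Finset (Finset (Fin n))) F
    ⟨∅, Finset.mem_univ _⟩
  constructor
  · refine ⟨F S₀, ⟨⟨S₀, rfl⟩, ?_⟩, ⟨?_, ?_⟩⟩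
    · rintro y ⟨S, rfl⟩
      exact hS₀ S (Finset.mem_univ S)
    · refine ⟨fun i => if i ∈ S₀ then (1:ℝ) else 0, fun i => ?_, ?_⟩
      · dsimp only
        split <;> norm_num
      · obtain ⟨σ, hσ⟩ := Stmt2Aux.exists_sortsDesc (fun i => if i ∈ S₀ then (1:ℝ) else 0)
        rw [hf _ σ hσ, Stmt2Aux.lovasz_indicator F hF0 S₀ σ hσ]
    · rintro y ⟨x, hx, rfl⟩
      obtain ⟨σ, hσ⟩ := Stmt2Aux.exists_sortsDesc x
      obtain ⟨θ, hθ, hle⟩ := Stmt2Aux.threshold F hF0 x σ hσ hx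
      rw [hf x σ hσ]
      exact (hS₀ _ (Finset.mem_univ _)).trans hle
  · intro x hx
    obtain ⟨σ, hσ⟩ := Stmt2Aux.exists_sortsDesc x
    obtain ⟨θ, hθ, hle⟩ := Stmt2Aux.threshold F hF0 x σ hσ hx
    rw [hf x σ hσ]
    exact ⟨θ, hθ, hle⟩
end

section
/- Let F be a submodular function on V with F(∅) = 0. Then min_{S ⊆ V} F(S) = max_{y ∈ B(F)} Σ_{i ∈ V} min(y_i, 0), and the maximum on the right-hand side is attained. -/
open Finset
open Finset

section Aux
variable {n : ℕ} {F : Finset (Fin n) → ℝ}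

/-- the greedy point w.r.t. the natural order -/
noncomputable def greedyPt (F : Finset (Fin n) → ℝ) : Fin n → ℝ :=
  fun k => F (univ.filter (fun j : Fin n => (j : ℕ) < (k : ℕ) + 1))
    - F (univ.filter (fun j : Fin n => (j : ℕ) < (k : ℕ)))

lemma greedy_mem (hF0 : F ∅ = 0) (hF : Submodular F) : greedyPt F ∈ basePolytope F := by
  have key : ∀ S : Finset (Fin n), ∑ i ∈ S, greedyPt F i ≤ F S := by
    intro S
    induction S using Finset.strongInduction with
    | _ S ih =>
      rcases S.eq_empty_or_nonempty with rfl | hS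
      · simp [hF0]
      · set k := S.max' hS with hk
        have hkS : k ∈ S := S.max'_mem hS
        have hsub : S.erase k ⊂ S := Finset.erase_ssubset hkS
        have ihe := ih _ hsub
        have hU : S ∪ univ.filter (fun j : Fin n => (j : ℕ) < (k : ℕ)) =
            univ.filter (fun j : Fin n => (j : ℕ) < (k : ℕ) + 1) := by
          ext a
          simp only [Finset.mem_union, Finset.mem_filter, Finset.mem_univ, true_and]
          constructor
          · rintro (h | h)
            · exact Nat.lt_succ_of_le (Fin.le_iff_val_le_val.mp (S.le_max' a h))
            · omega
          · intro h
            rcases Nat.lt_succ_iff_lt_or_eq.mp h with h | h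
            · exact Or.inr h
            · exact Or.inl (by
                have : a = k := Fin.ext h
                rwa [this])
        have hI : S ∩ univ.filter (fun j : Fin n => (j : ℕ) < (k : ℕ)) = S.erase k := by
          ext a
          simp only [Finset.mem_inter, Finset.mem_filter, Finset.mem_univ, true_and,
            Finset.mem_erase]
          constructor
          · rintro ⟨ha, hlt⟩
            exact ⟨fun h => by simp [h] at hlt, ha⟩
          · rintro ⟨hne, ha⟩
            refine ⟨ha, ?_⟩
            have := S.le_max' a ha
            have h2 : (a : ℕ) ≤ (k : ℕ) := Fin.le_iff_val_le_val.mp this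
            rcases lt_or_eq_of_le h2 with h | h
            · exact h
            · exact absurd (Fin.ext h) hne
        have hsm := hF S (univ.filter (fun j : Fin n => (j : ℕ) < (k : ℕ)))
        rw [hU, hI] at hsm
        have hgk : greedyPt F k ≤ F S - F (S.erase k) := by
          unfold greedyPt
          linarith
        calc ∑ i ∈ S, greedyPt F i
            = (∑ i ∈ S.erase k, greedyPt F i) + greedyPt F k :=
              (Finset.sum_erase_add S _ hkS).symm
          _ ≤ F (S.erase k) + (F S - F (S.erase k)) := add_le_add ihe hgk
          _ = F S := by ring
  refine ⟨key, ?_⟩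
  set G : ℕ → ℝ := fun m => F (univ.filter (fun j : Fin n => (j : ℕ) < m)) with hG
  have step : ∑ i : Fin n, greedyPt F i = ∑ i ∈ Finset.range n, (G (i + 1) - G i) := by
    rw [← Fin.sum_univ_eq_sum_range (fun i => G (i + 1) - G i) n]
    rfl
  rw [step, Finset.sum_range_sub G n]
  have h1 : univ.filter (fun j : Fin n => (j : ℕ) < n) = univ := by
    ext a; simp [a.isLt]
  have h2 : univ.filter (fun j : Fin n => (j : ℕ) < 0) = ∅ := by
    ext a; simp
  simp only [hG, h1, h2, hF0]
  ring

lemma bp_compact (F : Finset (Fin n) → ℝ) : IsCompact (basePolytope F) := by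
  have hclosed : IsClosed (basePolytope F) := by
    have : basePolytope F =
        (⋂ S : Finset (Fin n), {y : Fin n → ℝ | ∑ i ∈ S, y i ≤ F S}) ∩
          {y : Fin n → ℝ | ∑ i, y i = F Finset.univ} := by
      ext y; simp [basePolytope, Set.mem_iInter]
    rw [this]
    refine IsClosed.inter (isClosed_iInter fun S => ?_) ?_
    · exact isClosed_le (by continuity) continuous_const
    · exact isClosed_eq (by continuity) continuous_const
  have hsub : basePolytope F ⊆ Set.Icc
      (fun i => F Finset.univ - F (Finset.univ.erase i)) (fun i => F {i}) := by
    rintro y ⟨h1, h2⟩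
    constructor
    · intro i
      have := h1 (Finset.univ.erase i)
      have hsum : (∑ j ∈ Finset.univ.erase i, y j) + y i = ∑ j, y j :=
        Finset.sum_erase_add _ _ (Finset.mem_univ i)
      simp only
      linarith [h2 ▸ hsum]
    · intro i
      have := h1 {i}
      simpa using this
  exact (isCompact_Icc).of_isClosed_subset hclosed hsub

/-- tight sets are closed under union and intersection -/
lemma tight_ui (hF : Submodular F) (y : Fin n → ℝ) (hy : ∀ S, ∑ i ∈ S, y i ≤ F S)
    {S T : Finset (Fin n)} (hS : ∑ i ∈ S, y i = F S) (hT : ∑ i ∈ T, y i = F T) :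
    (∑ i ∈ S ∪ T, y i = F (S ∪ T)) ∧ (∑ i ∈ S ∩ T, y i = F (S ∩ T)) := by
  have hsum : (∑ i ∈ S ∪ T, y i) + ∑ i ∈ S ∩ T, y i = (∑ i ∈ S, y i) + ∑ i ∈ T, y i :=
    Finset.sum_union_inter
  have h1 := hy (S ∪ T)
  have h2 := hy (S ∩ T)
  have h3 := hF S T
  constructor <;> linarith

end Aux

/-- dual of the discrete problem:
`min_{S ⊆ V} F(S) = max_{y ∈ B(F)} Σ_i min(y_i, 0)`, with both optima attained. -/
theorem statement3 {n : ℕ} (F : Finset (Fin n) → ℝ) (hF0 : F ∅ = 0) (hF : Submodular F) :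
    ∃ m : ℝ, IsLeast (Set.range F) m ∧
      IsGreatest ((fun y : Fin n → ℝ => ∑ i, min (y i) 0) '' basePolytope F) m := by
  set g : (Fin n → ℝ) → ℝ := fun y => ∑ i, min (y i) 0 with hg
  have hgcont : Continuous g := by
    apply continuous_finset_sum
    intro i _
    exact (continuous_apply i).min continuous_const
  obtain ⟨y, hyB, hymax⟩ := (bp_compact F).exists_isMaxOn ⟨_, greedy_mem hF0 hF⟩
    hgcont.continuousOn
  obtain ⟨hy1, hy2⟩ := hyB
  -- exchange lemma
  have exch : ∀ i j : Fin n, y i < 0 → 0 < y j →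
      ∃ S : Finset (Fin n), i ∈ S ∧ j ∉ S ∧ ∑ k ∈ S, y k = F S := by
    intro i j hi hj
    by_contra hcon
    push_neg at hcon
    have hij : i ≠ j := fun h => absurd (h ▸ hi) (not_lt.mpr hj.le)
    have hstrict : ∀ S : Finset (Fin n), i ∈ S → j ∉ S → ∑ k ∈ S, y k < F S := by
      intro S hiS hjS
      exact lt_of_le_of_ne (hy1 S) (hcon S hiS hjS)
    set A : Finset (Finset (Fin n)) :=
      Finset.univ.filter (fun S => i ∈ S ∧ j ∉ S) with hA
    have hAne : A.Nonempty := ⟨{i}, by simp [hA, hij.symm]⟩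
    obtain ⟨S0, hS0A, hS0min⟩ := Finset.exists_min_image A (fun S => F S - ∑ k ∈ S, y k) hAne
    simp only [hA, Finset.mem_filter, Finset.mem_univ, true_and] at hS0A
    set ε := F S0 - ∑ k ∈ S0, y k with hε
    have hεpos : 0 < ε := by
      have := hstrict S0 hS0A.1 hS0A.2; linarith
    set δ := min ε (min (y j) (-y i)) with hδ
    have hδpos : 0 < δ := by
      apply lt_min hεpos
      apply lt_min hj
      linarith
    set y' : Fin n → ℝ :=
      fun k => y k + (if k = i then δ else 0) - (if k = j then δ else 0) with hy'
    have hsum' : ∀ S : Finset (Fin n), ∑ k ∈ S, y' k =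
        (∑ k ∈ S, y k) + (if i ∈ S then δ else 0) - (if j ∈ S then δ else 0) := by
      intro S
      simp only [hy']
      rw [Finset.sum_sub_distrib, Finset.sum_add_distrib,
        Finset.sum_ite_eq' S i (fun _ => δ), Finset.sum_ite_eq' S j (fun _ => δ)]
    have hy'B : y' ∈ basePolytope F := by
      constructor
      · intro S
        rw [hsum' S]
        by_cases hiS : i ∈ S <;> by_cases hjS : j ∈ S <;>
          simp only [hiS, hjS, if_true, if_false]
        · have := hy1 S; linarith
        · have hle : ε ≤ F S - ∑ k ∈ S, y k := by
            have := hS0min S (by simp [hA, hiS, hjS])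
            linarith
          have : δ ≤ ε := min_le_left _ _
          linarith
        · have := hy1 S; linarith
        · have := hy1 S; linarith
      · rw [hsum' Finset.univ]
        simp [hy2]
    have hgy' : g y' = g y + δ := by
      have hpt : ∀ k : Fin n, min (y' k) 0 = min (y k) 0 + (if k = i then δ else 0) := by
        intro k
        by_cases hki : k = i
        · subst hki
          have h1 : y' k = y k + δ := by simp [hy', hij]
          have h2 : y k + δ ≤ 0 := by
            have : δ ≤ -y k := (min_le_right _ _).trans (min_le_right _ _)
            linarith
          rw [h1, if_pos rfl, min_eq_left h2, min_eq_left hi.le]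
        · by_cases hkj : k = j
          · subst hkj
            have h1 : y' k = y k - δ := by simp [hy', fun h => hki h]
            have hδy : δ ≤ y k := (min_le_right _ _).trans (min_le_left _ _)
            rw [h1, if_neg hki, min_eq_right (by linarith), min_eq_right hj.le, add_zero]
          · have h1 : y' k = y k := by simp [hy', hki, hkj]
            rw [h1, if_neg hki, add_zero]
      show (∑ k, min (y' k) 0) = (∑ k, min (y k) 0) + δ
      calc ∑ k, min (y' k) 0 = ∑ k, (min (y k) 0 + if k = i then δ else 0) :=
            Finset.sum_congr rfl (fun k _ => hpt k)
        _ = (∑ k, min (y k) 0) + δ := by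
            rw [Finset.sum_add_distrib, Finset.sum_ite_eq' Finset.univ i (fun _ => δ)]
            simp
    have := hymax hy'B
    simp only [Set.mem_setOf_eq] at this
    rw [hgy'] at this
    linarith
  -- choice of tight separating sets
  have exch' : ∀ i j : Fin n, ∃ S : Finset (Fin n),
      (∑ k ∈ S, y k = F S) ∧ (y i < 0 → 0 < y j → i ∈ S ∧ j ∉ S) := by
    intro i j
    by_cases h : y i < 0 ∧ 0 < y j
    · obtain ⟨S, h1, h2, h3⟩ := exch i j h.1 h.2
      exact ⟨S, h3, fun _ _ => ⟨h1, h2⟩⟩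
    · exact ⟨Finset.univ, hy2, fun h1 h2 => absurd ⟨h1, h2⟩ h⟩
  choose Sep hSepT hSepM using exch'
  set N : Finset (Fin n) := Finset.univ.filter (fun i => y i < 0) with hN
  set P : Finset (Fin n) := Finset.univ.filter (fun j => 0 < y j) with hP
  -- tightness of infs
  have tight_inf : ∀ (Q : Finset (Fin n)) (f : Fin n → Finset (Fin n)),
      (∀ j ∈ Q, ∑ k ∈ f j, y k = F (f j)) → ∑ k ∈ Q.inf f, y k = F (Q.inf f) := by
    intro Q
    induction Q using Finset.cons_induction with
    | empty => intro f _; simpa using hy2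
    | cons a Q ha ih =>
      intro f hf
      rw [Finset.inf_cons]
      have h1 := hf a (Finset.mem_cons_self a Q)
      have h2 := ih f (fun j hj => hf j (Finset.mem_cons_of_mem hj))
      exact (tight_ui hF y hy1 h1 h2).2
  have tight_sup : ∀ (Q : Finset (Fin n)) (f : Fin n → Finset (Fin n)),
      (∀ j ∈ Q, ∑ k ∈ f j, y k = F (f j)) → ∑ k ∈ Q.sup f, y k = F (Q.sup f) := by
    intro Q
    induction Q using Finset.cons_induction with
    | empty => intro f _; simpa using hF0.symm
    | cons a Q ha ih =>
      intro f hf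
      rw [Finset.sup_cons]
      have h1 := hf a (Finset.mem_cons_self a Q)
      have h2 := ih f (fun j hj => hf j (Finset.mem_cons_of_mem hj))
      exact (tight_ui hF y hy1 h1 h2).1
  set Inner : Fin n → Finset (Fin n) := fun i => P.inf (Sep i) with hInner
  set T : Finset (Fin n) := N.sup Inner with hT
  have hTtight : ∑ k ∈ T, y k = F T := by
    apply tight_sup
    intro i _
    apply tight_inf
    intro j _
    exact hSepT i j
  have hNT : ∀ i, y i < 0 → i ∈ T := by
    intro i hi
    rw [hT, Finset.mem_sup]
    refine ⟨i, by simp [hN, hi], ?_⟩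
    rw [hInner]
    rw [Finset.mem_inf]
    intro j hj
    have hjP : 0 < y j := by simpa [hP] using hj
    exact (hSepM i j hi hjP).1
  have hTP : ∀ k ∈ T, y k ≤ 0 := by
    intro k hk
    by_contra hpos
    push_neg at hpos
    rw [hT, Finset.mem_sup] at hk
    obtain ⟨i, hiN, hkInner⟩ := hk
    have hiNeg : y i < 0 := by simpa [hN] using hiN
    rw [hInner, Finset.mem_inf] at hkInner
    have := hkInner k (by simp [hP, hpos])
    exact (hSepM i k hiNeg hpos).2 this
  -- g y = F T
  have hgyT : g y = F T := by
    rw [← hTtight]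
    have h1 : ∑ k ∈ T, min (y k) 0 = ∑ k : Fin n, min (y k) 0 := by
      apply Finset.sum_subset (Finset.subset_univ T)
      intro x _ hx
      have : ¬ y x < 0 := fun h => hx (hNT x h)
      rw [min_eq_right (not_lt.mp this)]
    have h2 : ∑ k ∈ T, min (y k) 0 = ∑ k ∈ T, y k :=
      Finset.sum_congr rfl (fun k hk => min_eq_left (hTP k hk))
    show (∑ k : Fin n, min (y k) 0) = ∑ k ∈ T, y k
    rw [← h1, h2]
  -- weak duality
  have weak : ∀ z ∈ basePolytope F, ∀ S : Finset (Fin n), g z ≤ F S := by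
    rintro z ⟨hz1, _⟩ S
    calc g z = ∑ k : Fin n, min (z k) 0 := rfl
      _ ≤ ∑ k ∈ S, min (z k) 0 := by
          have hsplit := Finset.sum_sdiff (f := fun k => min (z k) 0) (Finset.subset_univ S)
          have hnp : ∑ k ∈ Finset.univ \ S, min (z k) 0 ≤ 0 :=
            Finset.sum_nonpos (fun k _ => min_le_right _ _)
          linarith
      _ ≤ ∑ k ∈ S, z k := Finset.sum_le_sum (fun k _ => min_le_left _ _)
      _ ≤ F S := hz1 S
  refine ⟨g y, ⟨⟨T, hgyT.symm⟩, ?_⟩, ⟨⟨y, ⟨hy1, hy2⟩, rfl⟩, ?_⟩⟩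
  · rintro r ⟨S, rfl⟩
    exact weak y ⟨hy1, hy2⟩ S
  · rintro v ⟨z, hzB, rfl⟩
    exact hymax hzB
end

section
/- Let F_1, …, F_r be submodular functions on V with F_j(∅) = 0 for all j, and let F = Σ_{j=1}^r F_j. Then min_{S ⊆ V} F(S) = sup { Σ_{j=1}^r g_j(λ_j) : λ_1, …, λ_r ∈ ℝ^V with Σ_{j=1}^r λ_j = 0 }, where g_j(λ) = min_{S ⊆ V} (F_j(S) − λ(S)); moreover the supremum is attained. -/
open Finset
open Finset

lemma frank_sep {n : ℕ} (E : Finset (Fin n)) (Fc Gc : Finset (Fin n) → ℝ)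
    (hF0 : Fc ∅ = 0) (hG0 : Gc ∅ = 0)
    (hFsub : ∀ A B : Finset (Fin n), A ⊆ E → B ⊆ E → Fc (A ∪ B) + Fc (A ∩ B) ≤ Fc A + Fc B)
    (hGsup : ∀ A B : Finset (Fin n), A ⊆ E → B ⊆ E → Gc A + Gc B ≤ Gc (A ∪ B) + Gc (A ∩ B))
    (hGF : ∀ T ⊆ E, Gc T ≤ Fc T) :
    ∃ y : Fin n → ℝ, ∀ T ⊆ E, Gc T ≤ ∑ i ∈ T, y i ∧ ∑ i ∈ T, y i ≤ Fc T := by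
  induction E using Finset.induction_on generalizing Fc Gc with
  | empty =>
    refine ⟨0, fun T hT => ?_⟩
    rw [Finset.subset_empty.1 hT]
    simp [hF0, hG0]
  | @insert a s ha IH =>
    have hsub : s ⊆ insert a s := Finset.subset_insert a s
    have hmem : ∀ T : Finset (Fin n), T ⊆ s → insert a T ⊆ insert a s :=
      fun T hT => Finset.insert_subset_insert a hT
    set c : ℝ := s.powerset.inf' ⟨∅, Finset.empty_mem_powerset s⟩
      (fun A => Fc (insert a A) - Gc A) with hc
    have hcross : ∀ A B : Finset (Fin n), A ⊆ s → B ⊆ s →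
        Gc (insert a B) + Gc A ≤ Fc (insert a A) + Fc B := by
      intro A B hA hB
      have haA : a ∉ A := fun h => ha (hA h)
      have haB : a ∉ B := fun h => ha (hB h)
      have h1 := hFsub (insert a A) B (hmem A hA) (hB.trans hsub)
      rw [Finset.insert_union, Finset.insert_inter_of_notMem haB] at h1
      have h2 := hGsup (insert a B) A (hmem B hB) (hA.trans hsub)
      rw [Finset.insert_union, Finset.insert_inter_of_notMem haA,
        Finset.union_comm B A, Finset.inter_comm B A] at h2
      have h3 := hGF (insert a (A ∪ B)) (hmem _ (Finset.union_subset hA hB))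
      have h4 := hGF (A ∩ B) (((Finset.inter_subset_left).trans hA).trans hsub)
      linarith
    have hc_le : ∀ A : Finset (Fin n), A ⊆ s → c ≤ Fc (insert a A) - Gc A := by
      intro A hA
      exact Finset.inf'_le _ (Finset.mem_powerset.2 hA)
    have hc_ge : ∀ B : Finset (Fin n), B ⊆ s → Gc (insert a B) - Fc B ≤ c := by
      intro B hB
      apply Finset.le_inf'
      intro A hA
      have := hcross A B (Finset.mem_powerset.1 hA) hB
      linarith
    set F' : Finset (Fin n) → ℝ := fun T => min (Fc T) (Fc (insert a T) - c) with hF'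
    set G' : Finset (Fin n) → ℝ := fun T => max (Gc T) (Gc (insert a T) - c) with hG'
    have hF'0 : F' ∅ = 0 := by
      have h := hc_le ∅ (Finset.empty_subset s)
      rw [hG0] at h
      simp only [hF', hF0]
      rw [min_eq_left]; linarith
    have hG'0 : G' ∅ = 0 := by
      have h := hc_ge ∅ (Finset.empty_subset s)
      rw [hF0] at h
      simp only [hG', hG0]
      rw [max_eq_left]; linarith
    have huu : ∀ A B : Finset (Fin n), A ⊆ s → B ⊆ s →
        insert a A ∪ insert a B = insert a (A ∪ B) := by
      intro A B _ _
      rw [Finset.insert_union, Finset.union_insert, Finset.insert_idem]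
    have hii : ∀ A B : Finset (Fin n), insert a A ∩ insert a B = insert a (A ∩ B) :=
      fun A B => (Finset.insert_inter_distrib A B a).symm
    have hF'sub : ∀ A B : Finset (Fin n), A ⊆ s → B ⊆ s →
        F' (A ∪ B) + F' (A ∩ B) ≤ F' A + F' B := by
      intro A B hA hB
      have haA : a ∉ A := fun h => ha (hA h)
      have haB : a ∉ B := fun h => ha (hB h)
      have l1 : F' (A ∪ B) ≤ Fc (A ∪ B) := min_le_left _ _
      have r1 : F' (A ∪ B) ≤ Fc (insert a (A ∪ B)) - c := min_le_right _ _
      have l2 : F' (A ∩ B) ≤ Fc (A ∩ B) := min_le_left _ _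
      have r2 : F' (A ∩ B) ≤ Fc (insert a (A ∩ B)) - c := min_le_right _ _
      rcases min_cases (Fc A) (Fc (insert a A) - c) with ⟨hAe, _⟩ | ⟨hAe, _⟩ <;>
        rcases min_cases (Fc B) (Fc (insert a B) - c) with ⟨hBe, _⟩ | ⟨hBe, _⟩ <;>
        rw [show F' A = min (Fc A) (Fc (insert a A) - c) from rfl,
            show F' B = min (Fc B) (Fc (insert a B) - c) from rfl, hAe, hBe]
      · have := hFsub A B (hA.trans hsub) (hB.trans hsub)
        linarith
      · have h := hFsub A (insert a B) (hA.trans hsub) (hmem B hB)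
        rw [Finset.union_insert, Finset.inter_insert_of_notMem haA] at h
        linarith
      · have h := hFsub (insert a A) B (hmem A hA) (hB.trans hsub)
        rw [Finset.insert_union, Finset.insert_inter_of_notMem haB] at h
        linarith
      · have h := hFsub (insert a A) (insert a B) (hmem A hA) (hmem B hB)
        rw [huu A B hA hB, hii A B] at h
        linarith
    have hG'sup : ∀ A B : Finset (Fin n), A ⊆ s → B ⊆ s →
        G' A + G' B ≤ G' (A ∪ B) + G' (A ∩ B) := by
      intro A B hA hB
      have haA : a ∉ A := fun h => ha (hA h)
      have haB : a ∉ B := fun h => ha (hB h)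
      have l1 : Gc (A ∪ B) ≤ G' (A ∪ B) := le_max_left _ _
      have r1 : Gc (insert a (A ∪ B)) - c ≤ G' (A ∪ B) := le_max_right _ _
      have l2 : Gc (A ∩ B) ≤ G' (A ∩ B) := le_max_left _ _
      have r2 : Gc (insert a (A ∩ B)) - c ≤ G' (A ∩ B) := le_max_right _ _
      rcases max_cases (Gc A) (Gc (insert a A) - c) with ⟨hAe, _⟩ | ⟨hAe, _⟩ <;>
        rcases max_cases (Gc B) (Gc (insert a B) - c) with ⟨hBe, _⟩ | ⟨hBe, _⟩ <;>
        rw [show G' A = max (Gc A) (Gc (insert a A) - c) from rfl,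
            show G' B = max (Gc B) (Gc (insert a B) - c) from rfl, hAe, hBe]
      · have := hGsup A B (hA.trans hsub) (hB.trans hsub)
        linarith
      · have h := hGsup A (insert a B) (hA.trans hsub) (hmem B hB)
        rw [Finset.union_insert, Finset.inter_insert_of_notMem haA] at h
        linarith
      · have h := hGsup (insert a A) B (hmem A hA) (hB.trans hsub)
        rw [Finset.insert_union, Finset.insert_inter_of_notMem haB] at h
        linarith
      · have h := hGsup (insert a A) (insert a B) (hmem A hA) (hmem B hB)
        rw [huu A B hA hB, hii A B] at h
        linarith
    have hG'F' : ∀ T ⊆ s, G' T ≤ F' T := by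
      intro T hT
      have h1 : Gc T ≤ Fc T := hGF T (hT.trans hsub)
      have h2 : Gc T ≤ Fc (insert a T) - c := by have := hc_le T hT; linarith
      have h3 : Gc (insert a T) - c ≤ Fc T := by have := hc_ge T hT; linarith
      have h4 : Gc (insert a T) ≤ Fc (insert a T) := hGF _ (hmem T hT)
      exact max_le (le_min h1 h2) (le_min (by linarith) (by linarith))
    obtain ⟨y', hy'⟩ := IH F' G' hF'0 hG'0 hF'sub hG'sup hG'F'
    refine ⟨Function.update y' a c, fun T hT => ?_⟩
    by_cases haT : a ∈ T
    · set T' := T.erase a with hT'def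
      have hT's : T' ⊆ s := (Finset.subset_insert_iff.1 hT)
      have hTi : T = insert a T' := (Finset.insert_erase haT).symm
      have hsum : ∑ i ∈ T, Function.update y' a c i = c + ∑ i ∈ T', y' i := by
        rw [hTi, Finset.sum_insert (Finset.notMem_erase a T)]
        congr 1
        · exact Function.update_self a c y'
        · exact Finset.sum_congr rfl fun i hi =>
            Function.update_of_ne (Finset.ne_of_mem_erase hi) c y'
      obtain ⟨hg, hf⟩ := hy' T' hT's
      have hgl : Gc (insert a T') - c ≤ G' T' := le_max_right _ _
      have hfl : F' T' ≤ Fc (insert a T') - c := min_le_right _ _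
      rw [hsum, hTi]
      constructor <;> linarith
    · have hTs : T ⊆ s := fun i hi =>
        (Finset.mem_insert.1 (hT hi)).resolve_left (fun h : i = a => haT (h ▸ hi))
      have hsum : ∑ i ∈ T, Function.update y' a c i = ∑ i ∈ T, y' i :=
        Finset.sum_congr rfl fun i hi =>
          Function.update_of_ne (fun h : i = a => haT (h ▸ hi)) c y'
      obtain ⟨hg, hf⟩ := hy' T hTs
      have h1 : Gc T ≤ G' T := le_max_left _ _
      have h2 : F' T ≤ Fc T := min_le_left _ _
      rw [hsum]
      constructor <;> linarith

/-- Edmonds certificate at a minimizer. -/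
lemma edmonds_cert {n : ℕ} (Fc : Finset (Fin n) → ℝ) (hF0 : Fc ∅ = 0)
    (hFsub : Submodular Fc) (S₀ : Finset (Fin n)) (hmin : ∀ T, Fc S₀ ≤ Fc T) :
    ∃ y : Fin n → ℝ, (∀ T, ∑ i ∈ T, y i ≤ Fc T) ∧ (∑ i ∈ S₀, y i = Fc S₀) ∧
      (∀ T, Fc S₀ ≤ ∑ i ∈ T, y i) := by
  have hm0 : Fc S₀ ≤ 0 := hF0 ▸ hmin ∅
  set Gc : Finset (Fin n) → ℝ := fun T => if T = ∅ then 0 else Fc S₀ with hGc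
  have hGval : ∀ T : Finset (Fin n), T ≠ ∅ → Gc T = Fc S₀ := fun T hT => if_neg hT
  have hGsup : ∀ A B : Finset (Fin n), A ⊆ Finset.univ → B ⊆ Finset.univ →
      Gc A + Gc B ≤ Gc (A ∪ B) + Gc (A ∩ B) := by
    intro A B _ _
    by_cases hA : A = ∅
    · subst hA; simp [hGc]
    by_cases hB : B = ∅
    · subst hB; simp [hGc]
    have hAB : A ∪ B ≠ ∅ := fun h => hA (Finset.union_eq_empty.1 h).1
    rw [hGval A hA, hGval B hB, hGval _ hAB]
    by_cases hI : A ∩ B = ∅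
    · have h0 : Gc ∅ = 0 := by simp [hGc]
      rw [hI, h0]; linarith
    · rw [hGval _ hI]
  have hGF : ∀ T ⊆ (Finset.univ : Finset (Fin n)), Gc T ≤ Fc T := by
    intro T _
    by_cases hT : T = ∅
    · subst hT; simp [hGc, hF0]
    · rw [hGval T hT]; exact hmin T
  obtain ⟨y, hy⟩ := frank_sep Finset.univ Fc Gc hF0 (if_pos rfl)
    (fun A B _ _ => hFsub A B) hGsup hGF
  refine ⟨y, fun T => (hy T (Finset.subset_univ T)).2, ?_, fun T => ?_⟩
  · by_cases hS : S₀ = ∅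
    · subst hS; simpa [hF0] using
        ⟨(hy ∅ (Finset.subset_univ ∅)).1, (hy ∅ (Finset.subset_univ ∅)).2⟩
    · have h1 := (hy S₀ (Finset.subset_univ S₀)).1
      have h2 := (hy S₀ (Finset.subset_univ S₀)).2
      rw [hGval S₀ hS] at h1
      linarith
  · by_cases hT : T = ∅
    · subst hT; simpa using hm0
    · have h1 := (hy T (Finset.subset_univ T)).1
      rw [hGval T hT] at h1
      exact h1

/-- Decompose a vector dominated by a sum of submodular functions. -/
lemma decomp {n r : ℕ} (F : Fin r → Finset (Fin n) → ℝ)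
    (hF0 : ∀ j, F j ∅ = 0) (hF : ∀ j, Submodular (F j)) (s : Finset (Fin r)) :
    s.Nonempty → ∀ y : Fin n → ℝ,
      (∀ S : Finset (Fin n), ∑ i ∈ S, y i ≤ ∑ j ∈ s, F j S) →
    ∃ Y : Fin r → Fin n → ℝ, (∀ j ∈ s, ∀ S : Finset (Fin n), ∑ i ∈ S, Y j i ≤ F j S) ∧
      (∀ i, ∑ j ∈ s, Y j i = y i) := by
  induction s using Finset.cons_induction with
  | empty => intro h; exact absurd h (by simp)
  | cons a t hat IH =>
    intro _ y hy
    by_cases ht : t = ∅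
    · subst ht
      refine ⟨fun _ => y, fun j hj S => ?_, fun i => ?_⟩
      · have hja : j = a := by simpa using hj
        subst hja
        simpa using hy S
      · simp
    · have htne : t.Nonempty := Finset.nonempty_iff_ne_empty.2 ht
      have hGsup : ∀ A B : Finset (Fin n), A ⊆ Finset.univ → B ⊆ Finset.univ →
          (∑ i ∈ A, y i - ∑ j ∈ t, F j A) + (∑ i ∈ B, y i - ∑ j ∈ t, F j B) ≤
          (∑ i ∈ A ∪ B, y i - ∑ j ∈ t, F j (A ∪ B)) +
          (∑ i ∈ A ∩ B, y i - ∑ j ∈ t, F j (A ∩ B)) := by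
        intro A B _ _
        have hmod : ∑ i ∈ A ∪ B, y i + ∑ i ∈ A ∩ B, y i = ∑ i ∈ A, y i + ∑ i ∈ B, y i :=
          Finset.sum_union_inter
        have hsub : ∑ j ∈ t, F j (A ∪ B) + ∑ j ∈ t, F j (A ∩ B) ≤
            ∑ j ∈ t, F j A + ∑ j ∈ t, F j B := by
          rw [← Finset.sum_add_distrib, ← Finset.sum_add_distrib]
          exact Finset.sum_le_sum fun j _ => hF j A B
        linarith
      obtain ⟨z, hz⟩ := frank_sep Finset.univ (F a)
        (fun S => ∑ i ∈ S, y i - ∑ j ∈ t, F j S) (hF0 a)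
        (by simp [hF0]) (fun A B _ _ => hF a A B) hGsup
        (by
          intro T _
          have h := hy T
          rw [Finset.sum_cons] at h
          show ∑ i ∈ T, y i - ∑ j ∈ t, F j T ≤ F a T
          linarith)
      obtain ⟨Y', hY'1, hY'2⟩ := IH htne (fun i => y i - z i)
        (by
          intro S
          have h1 := (hz S (Finset.subset_univ S)).1
          rw [Finset.sum_sub_distrib]
          linarith)
      refine ⟨Function.update Y' a z, fun j hj S => ?_, fun i => ?_⟩
      · rcases Finset.mem_cons.1 hj with hja | hjt
        · subst hja
          rw [show Function.update Y' j z j = z from Function.update_self j z Y']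
          exact (hz S (Finset.subset_univ S)).2
        · have hja : j ≠ a := fun h : j = a => hat (h ▸ hjt)
          rw [Function.update_of_ne hja z Y']
          exact hY'1 j hjt S
      · rw [Finset.sum_cons]
        rw [show Function.update Y' a z a = z from Function.update_self a z Y']
        have : ∑ j ∈ t, Function.update Y' a z j i = ∑ j ∈ t, Y' j i :=
          Finset.sum_congr rfl fun j hj => by
            rw [Function.update_of_ne (fun h : j = a => hat (h ▸ hj)) z Y']
        rw [this, hY'2 i]
        ring

/-- Lemma 1, dual decomposition of the nonsmooth problem:
for submodular `F_1, …, F_r` with `F_j(∅) = 0` and `F = Σ_j F_j`,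
`min_S F(S) = sup { Σ_j g_j(λ_j) : Σ_j λ_j = 0 }` where
`g_j(λ) = min_S (F_j(S) − λ(S))`, and the supremum is attained. -/
theorem statement4 {n r : ℕ} (F : Fin r → Finset (Fin n) → ℝ)
    (hF0 : ∀ j, F j ∅ = 0) (hF : ∀ j, Submodular (F j)) :
    ∃ m : ℝ, IsLeast (Set.range (fun S : Finset (Fin n) => ∑ j, F j S)) m ∧
      IsGreatest {v : ℝ | ∃ lam : Fin r → Fin n → ℝ, (∑ j, lam j) = 0 ∧
        v = ∑ j, ⨅ S : Finset (Fin n), (F j S - ∑ i ∈ S, lam j i)} m := by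
  rcases Nat.eq_zero_or_pos r with hr | hr
  · subst hr
    refine ⟨0, ⟨⟨∅, by simp⟩, ?_⟩, ⟨⟨0, by simp, by simp⟩, ?_⟩⟩
    · rintro v ⟨S, rfl⟩; simp
    · rintro v ⟨lam, -, rfl⟩; simp
  · set Fs : Finset (Fin n) → ℝ := fun S => ∑ j, F j S with hFs
    obtain ⟨S₀, hS₀⟩ := Finite.exists_min Fs
    have hFs0 : Fs ∅ = 0 := by simp [hFs, hF0]
    have hFssub : Submodular Fs := by
      intro A B
      simp only [hFs]
      rw [← Finset.sum_add_distrib, ← Finset.sum_add_distrib]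
      exact Finset.sum_le_sum fun j _ => hF j A B
    obtain ⟨y, hy1, hy2, hy3⟩ := edmonds_cert Fs hFs0 hFssub S₀ hS₀
    have huniv : (Finset.univ : Finset (Fin r)).Nonempty := ⟨⟨0, hr⟩, Finset.mem_univ _⟩
    obtain ⟨Y, hY1, hY2⟩ := decomp F hF0 hF Finset.univ huniv y (fun S => hy1 S)
    set m := Fs S₀ with hm
    have weak : ∀ lam : Fin r → Fin n → ℝ, (∑ j, lam j) = 0 →
        ∑ j, ⨅ S : Finset (Fin n), (F j S - ∑ i ∈ S, lam j i) ≤ m := by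
      intro lam hlam
      have h1 : ∀ j : Fin r, (⨅ S : Finset (Fin n), (F j S - ∑ i ∈ S, lam j i)) ≤
          F j S₀ - ∑ i ∈ S₀, lam j i :=
        fun j => ciInf_le ((Set.finite_range _).bddBelow) S₀
      have h3 : ∑ j, ∑ i ∈ S₀, lam j i = 0 := by
        rw [Finset.sum_comm]
        have hz : ∀ i ∈ S₀, ∑ j, lam j i = 0 := by
          intro i _
          have hc := congrFun hlam i
          rw [Finset.sum_apply] at hc
          simpa using hc
        rw [Finset.sum_congr rfl hz]
        simp
      have h2 : ∑ j, (F j S₀ - ∑ i ∈ S₀, lam j i) = m := by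
        rw [Finset.sum_sub_distrib, h3, hm, hFs]
        ring
      calc ∑ j, ⨅ S : Finset (Fin n), (F j S - ∑ i ∈ S, lam j i)
          ≤ ∑ j, (F j S₀ - ∑ i ∈ S₀, lam j i) := Finset.sum_le_sum fun j _ => h1 j
        _ = m := h2
    have hrne : (r : ℝ) ≠ 0 := Nat.cast_ne_zero.2 hr.ne'
    have hrpos : (0 : ℝ) < r := Nat.cast_pos.2 hr
    set lam : Fin r → Fin n → ℝ := fun j i => Y j i - y i / r with hlamdef
    have hlam0 : (∑ j, lam j) = 0 := by
      funext i
      rw [Finset.sum_apply]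
      simp only [hlamdef]
      rw [Finset.sum_sub_distrib, hY2 i, Finset.sum_const, Finset.card_univ,
        Fintype.card_fin, nsmul_eq_mul]
      field_simp
      simp
    have hlow : ∀ j : Fin r, m / r ≤ ⨅ S : Finset (Fin n), (F j S - ∑ i ∈ S, lam j i) := by
      intro j
      apply le_ciInf
      intro S
      have hsum : ∑ i ∈ S, lam j i = ∑ i ∈ S, Y j i - (∑ i ∈ S, y i) / r := by
        simp only [hlamdef]
        rw [Finset.sum_sub_distrib, Finset.sum_div]
      have h1 : ∑ i ∈ S, Y j i ≤ F j S := hY1 j (Finset.mem_univ j) S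
      have h2 : m ≤ ∑ i ∈ S, y i := hy3 S
      have h3 : m / r ≤ (∑ i ∈ S, y i) / r := (div_le_div_iff_of_pos_right hrpos).2 h2
      rw [hsum]
      linarith
    have hsumlow : m ≤ ∑ j, ⨅ S : Finset (Fin n), (F j S - ∑ i ∈ S, lam j i) := by
      calc m = ∑ _j : Fin r, m / r := by
            rw [Finset.sum_const, Finset.card_univ, Fintype.card_fin, nsmul_eq_mul]
            field_simp
        _ ≤ _ := Finset.sum_le_sum fun j _ => hlow j
    refine ⟨m, ⟨⟨S₀, rfl⟩, ?_⟩, ⟨⟨lam, hlam0, le_antisymm hsumlow (weak lam hlam0)⟩, ?_⟩⟩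
    · rintro v ⟨S, rfl⟩
      exact hS₀ S
    · rintro v ⟨lam', h1, rfl⟩
      exact weak lam' h1
end

section
/- Let F_1, …, F_r be submodular functions on V with F_j(∅) = 0, and let f_j be the Lovász extension of F_j. Then min_{x ∈ ℝ^V} [ Σ_{j=1}^r f_j(x) + (1/2)‖x‖² ] = − min { (r/2) Σ_{j=1}^r ‖y_j − λ_j‖² : y_j ∈ B(F_j) for all j, λ_1,…,λ_r ∈ ℝ^V with Σ_{j=1}^r λ_j = 0 }, and both the minimum on the left and the minimum on the right are attained. -/
open Finset
open Finset

namespace St5Aux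

variable {n : ℕ}

/-- Prefix set of a permutation. -/
def Pre (σ : Equiv.Perm (Fin n)) (m : ℕ) : Finset (Fin n) :=
  (Finset.univ.filter (fun j : Fin n => (j : ℕ) < m)).image ⇑σ

lemma Pre_zero (σ : Equiv.Perm (Fin n)) : Pre σ 0 = ∅ := by
  simp [Pre]

lemma Pre_top (σ : Equiv.Perm (Fin n)) : Pre σ n = Finset.univ := by
  have h : (Finset.univ.filter (fun j : Fin n => (j : ℕ) < n)) = Finset.univ := by
    apply Finset.filter_true_of_mem; intro j _; exact j.isLt
  rw [Pre, h, Finset.image_univ_equiv]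

lemma not_mem_Pre (σ : Equiv.Perm (Fin n)) {m : ℕ} (hm : m < n) :
    σ ⟨m, hm⟩ ∉ Pre σ m := by
  simp only [Pre, Finset.mem_image, Finset.mem_filter, Finset.mem_univ, true_and]
  rintro ⟨j, hj, hje⟩
  have := σ.injective hje
  subst this
  simp at hj

lemma Pre_succ (σ : Equiv.Perm (Fin n)) {m : ℕ} (hm : m < n) :
    Pre σ (m + 1) = insert (σ ⟨m, hm⟩) (Pre σ m) := by
  ext i
  simp only [Pre, Finset.mem_image, Finset.mem_filter, Finset.mem_univ, true_and,
    Finset.mem_insert]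
  constructor
  · rintro ⟨j, hj, rfl⟩
    rcases Nat.lt_succ_iff_lt_or_eq.mp hj with h | h
    · exact Or.inr ⟨j, h, rfl⟩
    · left; congr 1; exact Fin.ext h
  · rintro (rfl | ⟨j, hj, rfl⟩)
    · exact ⟨⟨m, hm⟩, Nat.lt_succ_self m, rfl⟩
    · exact ⟨j, Nat.lt_succ_of_lt hj, rfl⟩

lemma Pre_fin_le (σ : Equiv.Perm (Fin n)) (k : Fin n) :
    (Finset.univ.filter (fun j : Fin n => j ≤ k)).image ⇑σ = Pre σ ((k : ℕ) + 1) := by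
  unfold Pre; congr 1; ext j
  simp only [Finset.mem_filter, Finset.mem_univ, true_and, Fin.le_def, Nat.lt_succ_iff]

lemma Pre_fin_lt (σ : Equiv.Perm (Fin n)) (k : Fin n) :
    (Finset.univ.filter (fun j : Fin n => j < k)).image ⇑σ = Pre σ (k : ℕ) := by
  unfold Pre; congr 1

lemma lovaszVal_pre (F : Finset (Fin n) → ℝ) (x : Fin n → ℝ) (σ : Equiv.Perm (Fin n)) :
    lovaszVal F x σ = ∑ k : Fin n, x (σ k) * (F (Pre σ ((k : ℕ) + 1)) - F (Pre σ (k : ℕ))) := by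
  unfold lovaszVal
  refine Finset.sum_congr rfl fun k _ => ?_
  rw [Pre_fin_le, Pre_fin_lt]


noncomputable def greedy (F : Finset (Fin n) → ℝ) (σ : Equiv.Perm (Fin n)) (i : Fin n) : ℝ :=
  F (Pre σ ((σ.symm i : Fin n) + 1)) - F (Pre σ (σ.symm i))

lemma greedy_apply (F : Finset (Fin n) → ℝ) (σ : Equiv.Perm (Fin n)) (k : Fin n) :
    greedy F σ (σ k) = F (Pre σ ((k : ℕ) + 1)) - F (Pre σ (k : ℕ)) := by
  unfold greedy
  rw [Equiv.symm_apply_apply]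

/-- Telescoping: the greedy vector sums to `F` on prefixes. -/
lemma sum_greedy_pre (F : Finset (Fin n) → ℝ) (hF0 : F ∅ = 0) (σ : Equiv.Perm (Fin n)) :
    ∀ m, m ≤ n → ∑ i ∈ Pre σ m, greedy F σ i = F (Pre σ m) := by
  intro m
  induction m with
  | zero => intro _; simp [Pre_zero, hF0]
  | succ m ih =>
    intro hm
    have hmn : m < n := hm
    rw [Pre_succ σ hmn, Finset.sum_insert (not_mem_Pre σ hmn), ih (le_of_lt hmn),
      greedy_apply]
    rw [← Pre_succ σ hmn]
    ring

/-- Edmonds: greedy vector satisfies all the constraints. -/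
lemma sum_greedy_le (F : Finset (Fin n) → ℝ) (hF0 : F ∅ = 0) (hsub : Submodular F)
    (σ : Equiv.Perm (Fin n)) :
    ∀ m, m ≤ n → ∀ S : Finset (Fin n), S ⊆ Pre σ m → ∑ i ∈ S, greedy F σ i ≤ F S := by
  intro m
  induction m with
  | zero =>
    intro _ S hS
    rw [Pre_zero] at hS
    rw [Finset.subset_empty.mp hS]
    simp [hF0]
  | succ m ih =>
    intro hm S hS
    have hmn : m < n := hm
    set c := σ ⟨m, hmn⟩ with hc
    rw [Pre_succ σ hmn] at hS
    by_cases hcS : c ∈ S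
    · have hS' : S.erase c ⊆ Pre σ m := by
        intro i hi
        rcases Finset.mem_erase.mp hi with ⟨hne, hiS⟩
        rcases Finset.mem_insert.mp (hS hiS) with h | h
        · exact absurd h hne
        · exact h
      have h1 : ∑ i ∈ S.erase c, greedy F σ i ≤ F (S.erase c) := ih (le_of_lt hmn) _ hS'
      have hsum : ∑ i ∈ S, greedy F σ i = greedy F σ c + ∑ i ∈ S.erase c, greedy F σ i :=
        (Finset.add_sum_erase S _ hcS).symm
      have hcup : S ∪ Pre σ m = Pre σ (m + 1) := by
        rw [Pre_succ σ hmn]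
        apply Finset.Subset.antisymm
        · intro i hi
          rcases Finset.mem_union.mp hi with h | h
          · exact hS h
          · exact Finset.mem_insert_of_mem h
        · intro i hi
          rcases Finset.mem_insert.mp hi with h | h
          · exact Finset.mem_union_left _ (h ▸ hcS)
          · exact Finset.mem_union_right _ h
      have hcap : S ∩ Pre σ m = S.erase c := by
        ext i
        simp only [Finset.mem_inter, Finset.mem_erase]
        constructor
        · rintro ⟨hiS, hiP⟩
          refine ⟨?_, hiS⟩
          rintro rfl
          exact not_mem_Pre σ hmn hiP
        · rintro ⟨hne, hiS⟩
          exact ⟨hiS, hS' (Finset.mem_erase.mpr ⟨hne, hiS⟩)⟩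
      have hsubm := hsub S (Pre σ m)
      rw [hcup, hcap] at hsubm
      have hg : greedy F σ c = F (Pre σ (m + 1)) - F (Pre σ m) := greedy_apply F σ ⟨m, hmn⟩
      linarith
    · apply ih (le_of_lt hmn)
      intro i hi
      rcases Finset.mem_insert.mp (hS hi) with h | h
      · subst h; exact absurd hi hcS
      · exact h

lemma greedy_mem_base (F : Finset (Fin n) → ℝ) (hF0 : F ∅ = 0) (hsub : Submodular F)
    (σ : Equiv.Perm (Fin n)) : greedy F σ ∈ basePolytope F := by
  constructor
  · intro S
    apply sum_greedy_le F hF0 hsub σ n le_rfl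
    rw [Pre_top]
    exact Finset.subset_univ S
  · have := sum_greedy_pre F hF0 σ n le_rfl
    rwa [Pre_top] at this

lemma abel_sum (a e : ℕ → ℝ) (N : ℕ) :
    ∑ k ∈ Finset.range N, a k * (e (k + 1) - e k)
      = (∑ k ∈ Finset.range N, (a k - a (k + 1)) * e (k + 1)) + (a N * e N - a 0 * e 0) := by
  induction N with
  | zero => simp
  | succ N ih =>
    rw [Finset.sum_range_succ, Finset.sum_range_succ, ih]
    ring

/-- The greedy vector's inner product with `x` is the Lovász value. -/
lemma inner_greedy (F : Finset (Fin n) → ℝ) (x : Fin n → ℝ) (σ : Equiv.Perm (Fin n)) :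
    ∑ i, x i * greedy F σ i = lovaszVal F x σ := by
  rw [lovaszVal_pre]
  rw [← Equiv.sum_comp σ (fun i => x i * greedy F σ i)]
  refine Finset.sum_congr rfl fun k _ => ?_
  rw [greedy_apply]

/-- For `y` in the base polytope and `σ` sorting `x` descending,
`⟨y, x⟩ ≤ lovaszVal F x σ`. -/
lemma inner_le_lovasz (F : Finset (Fin n) → ℝ) (hF0 : F ∅ = 0)
    (x : Fin n → ℝ) (σ : Equiv.Perm (Fin n)) (hσ : SortsDesc x σ)
    (y : Fin n → ℝ) (hy : y ∈ basePolytope F) :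
    ∑ i, x i * y i ≤ lovaszVal F x σ := by
  classical
  set xs : ℕ → ℝ := fun m => if h : m < n then x (σ ⟨m, h⟩) else 0 with hxs
  set Y : ℕ → ℝ := fun m => ∑ i ∈ Pre σ m, y i with hY
  set e : ℕ → ℝ := fun m => F (Pre σ m) - Y m with he
  have hxsk : ∀ k : Fin n, xs (k : ℕ) = x (σ k) := by
    intro k
    simp only [hxs, k.isLt, dif_pos, Fin.eta]
  have he0 : e 0 = 0 := by simp [he, hY, Pre_zero, hF0]
  have heN : e n = 0 := by
    simp only [he, hY, Pre_top]
    rw [hy.2]; ring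
  have henn : ∀ m, 0 ≤ e m := by
    intro m
    simp only [he, sub_nonneg]
    exact hy.1 _
  have hyP : ∀ m (hm : m < n), Y (m + 1) - Y m = y (σ ⟨m, hm⟩) := by
    intro m hm
    simp only [hY]
    rw [Pre_succ σ hm, Finset.sum_insert (not_mem_Pre σ hm)]
    ring
  have hxy : ∑ i, x i * y i = ∑ k ∈ Finset.range n, xs k * (Y (k + 1) - Y k) := by
    rw [← Equiv.sum_comp σ (fun i => x i * y i),
      ← Fin.sum_univ_eq_sum_range (fun m => xs m * (Y (m + 1) - Y m))]
    refine Finset.sum_congr rfl fun k _ => ?_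
    rw [hxsk k, hyP (k : ℕ) k.isLt, Fin.eta]
  have hL : lovaszVal F x σ
      = ∑ k ∈ Finset.range n, xs k * (F (Pre σ (k + 1)) - F (Pre σ k)) := by
    rw [lovaszVal_pre,
      ← Fin.sum_univ_eq_sum_range (fun m => xs m * (F (Pre σ (m + 1)) - F (Pre σ m)))]
    refine Finset.sum_congr rfl fun k _ => ?_
    rw [hxsk k]
  have hdiff : lovaszVal F x σ - ∑ i, x i * y i
      = ∑ k ∈ Finset.range n, xs k * (e (k + 1) - e k) := by
    rw [hxy, hL, ← Finset.sum_sub_distrib]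
    refine Finset.sum_congr rfl fun k _ => ?_
    simp only [he]
    ring
  have hnn : 0 ≤ lovaszVal F x σ - ∑ i, x i * y i := by
    rw [hdiff, abel_sum, heN, he0]
    have hterm : ∀ k ∈ Finset.range n, 0 ≤ (xs k - xs (k + 1)) * e (k + 1) := by
      intro k hk
      have hkn : k < n := Finset.mem_range.mp hk
      by_cases hk1 : k + 1 < n
      · apply mul_nonneg _ (henn (k + 1))
        have hle : (⟨k, hkn⟩ : Fin n) ≤ ⟨k + 1, hk1⟩ := by
          simp [Fin.le_def]
        have := hσ ⟨k, hkn⟩ ⟨k + 1, hk1⟩ hle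
        rw [sub_nonneg]
        simp only [hxs, hkn, hk1, dif_pos]
        exact this
      · have : k + 1 = n := by omega
        rw [this, heN, mul_zero]
    have := Finset.sum_nonneg hterm
    linarith
  linarith

/-- Existence of a descending sorting permutation. -/
lemma exists_sortsDesc (x : Fin n → ℝ) : ∃ σ : Equiv.Perm (Fin n), SortsDesc x σ := by
  refine ⟨Tuple.sort (fun i => -x i), ?_⟩
  intro j k hjk
  have := Tuple.monotone_sort (fun i => -x i) hjk
  simpa using this

/-- The base polytope is compact. -/
lemma basePolytope_isCompact (F : Finset (Fin n) → ℝ) : IsCompact (basePolytope F) := by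
  classical
  have hsub : basePolytope F ⊆
      Set.univ.pi (fun i : Fin n => Set.Icc (F Finset.univ - F (Finset.univ.erase i)) (F {i})) := by
    intro y hy
    intro i _
    constructor
    · have h1 : ∑ k ∈ Finset.univ.erase i, y k ≤ F (Finset.univ.erase i) := hy.1 _
      have h2 : ∑ k ∈ Finset.univ.erase i, y k + y i = ∑ k, y k :=
        Finset.sum_erase_add _ _ (Finset.mem_univ i)
      have h3 := hy.2
      linarith
    · have := hy.1 {i}
      simpa using this
  have hcomp : IsCompact (Set.univ.pi
      (fun i : Fin n => Set.Icc (F Finset.univ - F (Finset.univ.erase i)) (F {i}))) :=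
    isCompact_univ_pi (fun i => isCompact_Icc)
  refine IsCompact.of_isClosed_subset hcomp ?_ hsub
  have h1 : IsClosed {y : Fin n → ℝ | ∀ S : Finset (Fin n), ∑ i ∈ S, y i ≤ F S} := by
    have : {y : Fin n → ℝ | ∀ S : Finset (Fin n), ∑ i ∈ S, y i ≤ F S}
        = ⋂ S : Finset (Fin n), {y | ∑ i ∈ S, y i ≤ F S} := by
      ext y; simp
    rw [this]
    refine isClosed_iInter fun S => ?_
    exact isClosed_le (by continuity) continuous_const
  have h2 : IsClosed {y : Fin n → ℝ | ∑ i, y i = F Finset.univ} :=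
    isClosed_eq (by continuity) continuous_const
  exact h1.inter h2

/-- The base polytope contains segments. -/
lemma basePolytope_segment (F : Finset (Fin n) → ℝ) {z w : Fin n → ℝ}
    (hz : z ∈ basePolytope F) (hw : w ∈ basePolytope F) {ε : ℝ} (hε0 : 0 ≤ ε) (hε1 : ε ≤ 1) :
    (fun i => z i + ε * (w i - z i)) ∈ basePolytope F := by
  have key : ∀ S : Finset (Fin n),
      ∑ i ∈ S, (z i + ε * (w i - z i)) = (∑ i ∈ S, z i) + ε * ((∑ i ∈ S, w i) - ∑ i ∈ S, z i) := by
    intro S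
    rw [Finset.sum_add_distrib, ← Finset.mul_sum, Finset.sum_sub_distrib]
  constructor
  · intro S
    rw [key S]
    have hzS := hz.1 S
    have hwS := hw.1 S
    nlinarith
  · rw [key Finset.univ, hz.2, hw.2]
    ring

lemma opt_nonneg {c d : ℝ} (hd : 0 ≤ d)
    (h : ∀ ε : ℝ, 0 < ε → ε ≤ 1 → 0 ≤ 2 * ε * c + ε ^ 2 * d) : 0 ≤ c := by
  by_contra hc
  push_neg at hc
  set ε : ℝ := min 1 (-c / (d + 1)) with hε
  have hd1 : 0 < d + 1 := by linarith
  have hεpos : 0 < ε := by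
    exact lt_min one_pos (div_pos (by linarith) hd1)
  have hε1 : ε ≤ 1 := min_le_left _ _
  have hεle : ε ≤ -c / (d + 1) := min_le_right _ _
  have hεd : ε * (d + 1) ≤ -c := by
    rw [← le_div_iff₀ hd1]
    exact hεle
  have := h ε hεpos hε1
  nlinarith

lemma sum_sq_expand (u v : Fin n → ℝ) (ε : ℝ) :
    ∑ i, (u i + ε * v i) ^ 2
      = ∑ i, u i ^ 2 + 2 * ε * ∑ i, u i * v i + ε ^ 2 * ∑ i, v i ^ 2 := by
  rw [Finset.mul_sum, Finset.mul_sum, ← Finset.sum_add_distrib, ← Finset.sum_add_distrib]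
  exact Finset.sum_congr rfl fun i _ => by ring

end St5Aux

open St5Aux

/-- Lemma 2, dual of the proximal problem as a best approximation
problem in the product space:
`min_x [Σ_j f_j(x) + ½‖x‖²] = − min {(r/2) Σ_j ‖y_j − λ_j‖² : y_j ∈ B(F_j), Σ_j λ_j = 0}`,
with both minima attained. -/
theorem statement5 {n r : ℕ} (F : Fin r → Finset (Fin n) → ℝ)
    (hF0 : ∀ j, F j ∅ = 0) (hF : ∀ j, Submodular (F j))
    (f : Fin r → (Fin n → ℝ) → ℝ) (hf : ∀ j, IsLovasz (F j) (f j)) :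
    ∃ m : ℝ,
      IsLeast (Set.range (fun x : Fin n → ℝ =>
        (∑ j, f j x) + (1/2) * ∑ i, (x i)^2)) m ∧
      IsLeast {v : ℝ | ∃ y lam : Fin r → Fin n → ℝ,
        (∀ j, y j ∈ basePolytope (F j)) ∧ (∑ j, lam j) = 0 ∧
        v = ((r : ℝ)/2) * ∑ j, ∑ i, (y j i - lam j i)^2} (-m) := by
  classical
  set K : Set (Fin r → Fin n → ℝ) := {y | ∀ j, y j ∈ basePolytope (F j)} with hK
  have hKc : IsCompact K := by
    have hKeq : K = Set.univ.pi (fun j => basePolytope (F j)) := by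
      ext y; simp [hK, Set.mem_univ_pi]
    rw [hKeq]
    exact isCompact_univ_pi (fun j => basePolytope_isCompact (F j))
  have hKne : K.Nonempty :=
    ⟨fun j => greedy (F j) (Equiv.refl (Fin n)),
      fun j => greedy_mem_base (F j) (hF0 j) (hF j) _⟩
  set g : (Fin r → Fin n → ℝ) → ℝ := fun y => ∑ i, (∑ j, y j i) ^ 2 with hg
  have hgc : Continuous g := by
    apply continuous_finset_sum
    intro i _
    exact (continuous_finset_sum _
      (fun j _ => (continuous_apply i).comp (continuous_apply j))).pow 2
  obtain ⟨ys, hysK, hysmin⟩ := hKc.exists_isMinOn hKne hgc.continuousOn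
  set s : Fin n → ℝ := fun i => ∑ j, ys j i with hs
  -- first-order optimality of `ys`
  have hopt : ∀ y ∈ K, ∑ i, s i ^ 2 ≤ ∑ i, (∑ j, y j i) * s i := by
    intro y hyK
    set t : Fin n → ℝ := fun i => ∑ j, y j i with ht
    have hd : (0:ℝ) ≤ ∑ i, (t i - s i) ^ 2 :=
      Finset.sum_nonneg fun i _ => sq_nonneg _
    have key : ∀ ε : ℝ, 0 < ε → ε ≤ 1 →
        0 ≤ 2 * ε * (∑ i, s i * (t i - s i)) + ε ^ 2 * (∑ i, (t i - s i) ^ 2) := by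
      intro ε hε0 hε1
      have hz : (fun j => fun i => ys j i + ε * (y j i - ys j i)) ∈ K := by
        intro j
        exact basePolytope_segment (F j) (hysK j) (hyK j) (le_of_lt hε0) hε1
      have h1 : g ys ≤ g (fun j => fun i => ys j i + ε * (y j i - ys j i)) := hysmin hz
      have h2 : g (fun j => fun i => ys j i + ε * (y j i - ys j i))
          = ∑ i, (s i + ε * (t i - s i)) ^ 2 := by
        refine Finset.sum_congr rfl fun i _ => ?_
        congr 1
        rw [Finset.sum_add_distrib, ← Finset.mul_sum, Finset.sum_sub_distrib]
      have h3 := sum_sq_expand s (fun i => t i - s i) ε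
      have h4 : g ys = ∑ i, s i ^ 2 := rfl
      rw [h2, h3, h4] at h1
      linarith
    have hc := opt_nonneg hd key
    have hsplit : ∑ i, s i * (t i - s i) = (∑ i, t i * s i) - ∑ i, s i ^ 2 := by
      rw [← Finset.sum_sub_distrib]
      exact Finset.sum_congr rfl fun i _ => by ring
    rw [hsplit] at hc
    have : ∑ i, t i * s i = ∑ i, (∑ j, y j i) * s i := rfl
    linarith [this ▸ hc]
  set m : ℝ := -((1/2) * ∑ i, s i ^ 2) with hm
  refine ⟨m, ⟨?_, ?_⟩, ?_, ?_⟩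
  · -- membership of the LHS minimum
    set xstar : Fin n → ℝ := fun i => -s i with hxstar
    obtain ⟨σ, hσ⟩ := exists_sortsDesc xstar
    have hfeq : ∀ j, f j xstar = ∑ i, xstar i * greedy (F j) σ i := by
      intro j
      rw [hf j xstar σ hσ, ← inner_greedy]
    have hyg : (fun j => greedy (F j) σ) ∈ K :=
      fun j => greedy_mem_base (F j) (hF0 j) (hF j) σ
    have hub : ∑ j, f j xstar ≤ -∑ i, s i ^ 2 := by
      have h1 : ∑ j, f j xstar = ∑ i, xstar i * (∑ j, greedy (F j) σ i) := by
        rw [Finset.sum_congr rfl fun j _ => hfeq j, Finset.sum_comm]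
        exact Finset.sum_congr rfl fun i _ => by rw [Finset.mul_sum]
      have h2 := hopt _ hyg
      have h3 : ∑ i, xstar i * (∑ j, greedy (F j) σ i)
          = -∑ i, (∑ j, greedy (F j) σ i) * s i := by
        rw [← Finset.sum_neg_distrib]
        exact Finset.sum_congr rfl fun i _ => by simp [hxstar]; ring
      rw [h1, h3]
      linarith
    have hlb : -∑ i, s i ^ 2 ≤ ∑ j, f j xstar := by
      have h1 : ∀ j, ∑ i, xstar i * ys j i ≤ f j xstar := by
        intro j
        rw [hf j xstar σ hσ]
        exact inner_le_lovasz (F j) (hF0 j) xstar σ hσ _ (hysK j)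
      have h2 : ∑ j, ∑ i, xstar i * ys j i = -∑ i, s i ^ 2 := by
        rw [Finset.sum_comm, ← Finset.sum_neg_distrib]
        refine Finset.sum_congr rfl fun i _ => ?_
        rw [← Finset.mul_sum]
        simp [hxstar, hs]
        ring
      calc -∑ i, s i ^ 2 = ∑ j, ∑ i, xstar i * ys j i := h2.symm
        _ ≤ ∑ j, f j xstar := Finset.sum_le_sum fun j _ => h1 j
    have hfv : ∑ j, f j xstar = -∑ i, s i ^ 2 := le_antisymm hub hlb
    refine ⟨xstar, ?_⟩
    show (∑ j, f j xstar) + (1/2) * ∑ i, (xstar i)^2 = m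
    have hx2 : ∑ i, xstar i ^ 2 = ∑ i, s i ^ 2 :=
      Finset.sum_congr rfl fun i _ => by simp [hxstar]
    rw [hfv, hx2, hm]
    ring
  · -- lower bound of the LHS
    rintro v ⟨x, rfl⟩
    obtain ⟨σ, hσ⟩ := exists_sortsDesc x
    have h1 : ∀ j, ∑ i, x i * ys j i ≤ f j x := by
      intro j
      rw [hf j x σ hσ]
      exact inner_le_lovasz (F j) (hF0 j) x σ hσ _ (hysK j)
    have h2 : ∑ j, ∑ i, x i * ys j i = ∑ i, x i * s i := by
      rw [Finset.sum_comm]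
      exact Finset.sum_congr rfl fun i _ => by rw [← Finset.mul_sum]
    have h3 : ∑ i, x i * s i ≤ ∑ j, f j x := by
      rw [← h2]
      exact Finset.sum_le_sum fun j _ => h1 j
    have hsq : (0:ℝ) ≤ ∑ i, (x i + s i) ^ 2 :=
      Finset.sum_nonneg fun i _ => sq_nonneg _
    have hexp : ∑ i, (x i + s i) ^ 2
        = ∑ i, x i ^ 2 + 2 * 1 * ∑ i, x i * s i + 1 ^ 2 * ∑ i, s i ^ 2 := by
      have := sum_sq_expand x s 1
      simpa using this
    simp only [hm]
    nlinarith
  · -- membership of the RHS minimum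
    by_cases hr : r = 0
    · subst hr
      refine ⟨ys, ys, hysK, ?_, ?_⟩
      · simp
      · have hs0 : ∀ i, s i = 0 := fun i => by simp [hs]
        have : ∑ i, s i ^ 2 = 0 := by
          refine Finset.sum_eq_zero fun i _ => ?_
          rw [hs0 i]; ring
        simp [hm, this]
    · have hrR : (r : ℝ) ≠ 0 := Nat.cast_ne_zero.mpr hr
      refine ⟨ys, fun j => fun i => ys j i - s i / r, hysK, ?_, ?_⟩
      · funext i
        rw [Finset.sum_apply]
        have : ∑ j : Fin r, (ys j i - s i / r) = s i - r * (s i / r) := by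
          rw [Finset.sum_sub_distrib, Finset.sum_const, Finset.card_univ,
            Fintype.card_fin, nsmul_eq_mul]
        rw [this]
        field_simp
        simp
      · have hterm : ∀ (j : Fin r) (i : Fin n), ys j i - (ys j i - s i / r) = s i / r := by
          intros; ring
        have h1 : ∀ j : Fin r, ∑ i, (ys j i - (ys j i - s i / r)) ^ 2
            = (∑ i, s i ^ 2) / (r:ℝ) ^ 2 := by
          intro j
          rw [Finset.sum_congr rfl fun i _ => by rw [hterm j i, div_pow],
            ← Finset.sum_div]
        rw [Finset.sum_congr rfl fun j _ => h1 j, Finset.sum_const, Finset.card_univ,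
          Fintype.card_fin, nsmul_eq_mul, hm]
        field_simp
  · -- lower bound of the RHS
    rintro v ⟨y, lam, hyB, hlam, rfl⟩
    set t : Fin n → ℝ := fun i => ∑ j, y j i with ht
    have hti : ∀ i, t i = ∑ j, (y j i - lam j i) := by
      intro i
      have h0 : ∑ j, lam j i = 0 := by
        have := congrFun hlam i
        rwa [Finset.sum_apply] at this
      rw [Finset.sum_sub_distrib, h0]
      simp [ht]
    have hCS : ∀ i, t i ^ 2 ≤ (r : ℝ) * ∑ j, (y j i - lam j i) ^ 2 := by
      intro i
      rw [hti i]
      have := sq_sum_le_card_mul_sum_sq (s := (Finset.univ : Finset (Fin r)))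
        (f := fun j => y j i - lam j i)
      simpa [Finset.card_univ] using this
    have h1 : ∑ i, t i ^ 2 ≤ (r : ℝ) * ∑ i, ∑ j, (y j i - lam j i) ^ 2 := by
      rw [Finset.mul_sum]
      exact Finset.sum_le_sum fun i _ => hCS i
    have h2 : ∑ i, s i ^ 2 ≤ ∑ i, t i * s i := hopt y hyB
    have hsq : (0:ℝ) ≤ ∑ i, (t i - s i) ^ 2 :=
      Finset.sum_nonneg fun i _ => sq_nonneg _
    have hexp : ∑ i, (t i - s i) ^ 2
        = ∑ i, t i ^ 2 - 2 * ∑ i, t i * s i + ∑ i, s i ^ 2 := by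
      rw [Finset.mul_sum, ← Finset.sum_sub_distrib, ← Finset.sum_add_distrib]
      exact Finset.sum_congr rfl fun i _ => by ring
    have h3 : ∑ i, s i ^ 2 ≤ ∑ i, t i ^ 2 := by nlinarith
    have hswap : ∑ j, ∑ i, (y j i - lam j i) ^ 2 = ∑ i, ∑ j, (y j i - lam j i) ^ 2 :=
      Finset.sum_comm
    simp only [hm, neg_neg]
    rw [hswap]
    have hr0 : (0:ℝ) ≤ (r:ℝ) := Nat.cast_nonneg r
    nlinarith
end

section
/- Let F be a submodular function on V with F(∅) = 0 and f its Lovász extension. Then min_{x ∈ ℝ^V} [ f(x) + (1/2)‖x‖² ] = max_{y ∈ B(F)} − (1/2)‖y‖², both optima are attained, the minimizer x* of the left-hand problem is unique, the maximizer y* of the right-hand problem is the orthogonal projection of the origin onto the compact convex set B(F), and x* = − y*. -/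
open Finset
open Finset

/- ### Auxiliary machinery -/

/-- Prefix sets of a permutation. -/
def Pset' {n : ℕ} (σ : Equiv.Perm (Fin n)) (m : ℕ) : Finset (Fin n) :=
  (Finset.univ.filter (fun j : Fin n => (j : ℕ) < m)).image ⇑σ

lemma Pset'_zero {n : ℕ} (σ : Equiv.Perm (Fin n)) : Pset' σ 0 = ∅ := by
  simp [Pset']

lemma Pset'_top {n : ℕ} (σ : Equiv.Perm (Fin n)) : Pset' σ n = Finset.univ := by
  ext i
  simp only [Pset', Finset.mem_image, Finset.mem_filter, Finset.mem_univ, true_and, iff_true]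
  exact ⟨σ.symm i, (σ.symm i).isLt, σ.apply_symm_apply i⟩

lemma notmem_Pset' {n : ℕ} (σ : Equiv.Perm (Fin n)) (k : Fin n) : σ k ∉ Pset' σ (k : ℕ) := by
  simp only [Pset', Finset.mem_image, Finset.mem_filter, Finset.mem_univ, true_and]
  rintro ⟨j, hj, hje⟩
  exact absurd (σ.injective hje) (by rintro rfl; exact lt_irrefl _ hj)

lemma Pset'_succ {n : ℕ} (σ : Equiv.Perm (Fin n)) (k : Fin n) :
    Pset' σ ((k : ℕ) + 1) = insert (σ k) (Pset' σ (k : ℕ)) := by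
  ext i
  simp only [Pset', Finset.mem_image, Finset.mem_filter, Finset.mem_univ, true_and,
    Finset.mem_insert]
  constructor
  · rintro ⟨j, hj, rfl⟩
    rcases Nat.lt_succ_iff_lt_or_eq.mp hj with h | h
    · exact Or.inr ⟨j, h, rfl⟩
    · exact Or.inl (by congr 1; exact Fin.ext h)
  · rintro (rfl | ⟨j, hj, rfl⟩)
    · exact ⟨k, Nat.lt_succ_self _, rfl⟩
    · exact ⟨j, Nat.lt_succ_of_lt hj, rfl⟩

lemma filter_le_eq {n : ℕ} (σ : Equiv.Perm (Fin n)) (k : Fin n) :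
    (Finset.univ.filter (fun j => j ≤ k)).image ⇑σ = Pset' σ ((k : ℕ) + 1) := by
  have h : (Finset.univ.filter (fun j : Fin n => j ≤ k))
      = Finset.univ.filter (fun j : Fin n => (j : ℕ) < (k : ℕ) + 1) := by
    apply Finset.filter_congr
    intro j _
    rw [Fin.le_def]; omega
  rw [Pset', h]

lemma filter_lt_eq {n : ℕ} (σ : Equiv.Perm (Fin n)) (k : Fin n) :
    (Finset.univ.filter (fun j => j < k)).image ⇑σ = Pset' σ (k : ℕ) := by
  have h : (Finset.univ.filter (fun j : Fin n => j < k))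
      = Finset.univ.filter (fun j : Fin n => (j : ℕ) < (k : ℕ)) := by
    apply Finset.filter_congr
    intro j _
    rw [Fin.lt_def]
  rw [Pset', h]

/-- The greedy vector associated to a permutation. -/
noncomputable def greedy {n : ℕ} (F : Finset (Fin n) → ℝ) (σ : Equiv.Perm (Fin n)) :
    Fin n → ℝ :=
  fun i => F (Pset' σ ((σ.symm i : ℕ) + 1)) - F (Pset' σ (σ.symm i : ℕ))

lemma greedy_apply {n : ℕ} (F : Finset (Fin n) → ℝ) (σ : Equiv.Perm (Fin n)) (k : Fin n) :
    greedy F σ (σ k) = F (Pset' σ ((k : ℕ) + 1)) - F (Pset' σ (k : ℕ)) := by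
  simp [greedy]

lemma lovaszVal_eq_inner_greedy {n : ℕ} (F : Finset (Fin n) → ℝ) (x : Fin n → ℝ)
    (σ : Equiv.Perm (Fin n)) :
    lovaszVal F x σ = ∑ i, x i * greedy F σ i := by
  rw [← Equiv.sum_comp σ (fun i => x i * greedy F σ i)]
  unfold lovaszVal
  refine Finset.sum_congr rfl fun k _ => ?_
  rw [greedy_apply, filter_le_eq, filter_lt_eq]

lemma sum_univ_greedy {n : ℕ} (F : Finset (Fin n) → ℝ) (hF0 : F ∅ = 0)
    (σ : Equiv.Perm (Fin n)) :
    ∑ i, greedy F σ i = F Finset.univ := by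
  rw [← Equiv.sum_comp σ (greedy F σ)]
  calc ∑ k : Fin n, greedy F σ (σ k)
      = ∑ k : Fin n, (F (Pset' σ ((k : ℕ) + 1)) - F (Pset' σ (k : ℕ))) :=
        Finset.sum_congr rfl fun k _ => greedy_apply F σ k
    _ = ∑ m ∈ Finset.range n, (F (Pset' σ (m + 1)) - F (Pset' σ m)) :=
        Fin.sum_univ_eq_sum_range (fun m => F (Pset' σ (m + 1)) - F (Pset' σ m)) n
    _ = F (Pset' σ n) - F (Pset' σ 0) := Finset.sum_range_sub (fun m => F (Pset' σ m)) n
    _ = F Finset.univ := by rw [Pset'_zero, Pset'_top, hF0, sub_zero]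

lemma greedy_mem_s7 {n : ℕ} {F : Finset (Fin n) → ℝ} (hF0 : F ∅ = 0) (hF : Submodular F)
    (σ : Equiv.Perm (Fin n)) : greedy F σ ∈ basePolytope F := by
  refine ⟨fun S => ?_, sum_univ_greedy F hF0 σ⟩
  have hsum : ∑ i ∈ S, greedy F σ i
      = ∑ k : Fin n, (if σ k ∈ S then F (Pset' σ ((k:ℕ)+1)) - F (Pset' σ (k:ℕ)) else 0) := by
    have h1 : ∑ i ∈ S, greedy F σ i = ∑ i : Fin n, (if i ∈ S then greedy F σ i else 0) := by
      rw [Finset.sum_ite_mem, Finset.univ_inter]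
    rw [h1, ← Equiv.sum_comp σ (fun i => if i ∈ S then greedy F σ i else 0)]
    refine Finset.sum_congr rfl fun k _ => ?_
    by_cases hk : σ k ∈ S <;> simp [hk, greedy_apply]
  rw [hsum]
  have key : ∀ k : Fin n,
      (if σ k ∈ S then F (Pset' σ ((k:ℕ)+1)) - F (Pset' σ (k:ℕ)) else 0)
        ≤ F (S ∩ Pset' σ ((k:ℕ)+1)) - F (S ∩ Pset' σ (k:ℕ)) := by
    intro k
    by_cases hk : σ k ∈ S
    · simp only [hk, if_true]
      have h1 : S ∩ Pset' σ ((k:ℕ)+1) = (S ∩ Pset' σ (k:ℕ)) ∪ {σ k} := by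
        rw [Pset'_succ σ k]
        ext i
        simp only [Finset.mem_inter, Finset.mem_insert, Finset.mem_union, Finset.mem_singleton]
        constructor
        · rintro ⟨hiS, (rfl | hi)⟩
          · exact Or.inr rfl
          · exact Or.inl ⟨hiS, hi⟩
        · rintro (⟨hiS, hi⟩ | rfl)
          · exact ⟨hiS, Or.inr hi⟩
          · exact ⟨hk, Or.inl rfl⟩
      have h2 : Pset' σ ((k:ℕ)+1) = Pset' σ (k:ℕ) ∪ {σ k} := by
        rw [Pset'_succ σ k]; ext i; simp [or_comm]
      have hsub := hF ((S ∩ Pset' σ (k:ℕ)) ∪ {σ k}) (Pset' σ (k:ℕ))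
      have hU : ((S ∩ Pset' σ (k:ℕ)) ∪ {σ k}) ∪ Pset' σ (k:ℕ) = Pset' σ ((k:ℕ)+1) := by
        rw [h2]
        ext i
        simp only [Finset.mem_union, Finset.mem_inter, Finset.mem_singleton]
        tauto
      have hI : ((S ∩ Pset' σ (k:ℕ)) ∪ {σ k}) ∩ Pset' σ (k:ℕ) = S ∩ Pset' σ (k:ℕ) := by
        ext i
        simp only [Finset.mem_inter, Finset.mem_union, Finset.mem_singleton]
        constructor
        · rintro ⟨(⟨h1, h2⟩ | rfl), h3⟩
          · exact ⟨h1, h2⟩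
          · exact absurd h3 (notmem_Pset' σ k)
        · rintro ⟨h1, h2⟩
          exact ⟨Or.inl ⟨h1, h2⟩, h2⟩
      rw [hU, hI] at hsub
      rw [h1]
      linarith
    · simp only [hk, if_false]
      have : S ∩ Pset' σ ((k:ℕ)+1) = S ∩ Pset' σ (k:ℕ) := by
        rw [Pset'_succ σ k]
        ext i
        simp only [Finset.mem_inter, Finset.mem_insert]
        constructor
        · rintro ⟨hiS, (rfl | hi)⟩
          · exact absurd hiS hk
          · exact ⟨hiS, hi⟩
        · rintro ⟨hiS, hi⟩
          exact ⟨hiS, Or.inr hi⟩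
      rw [this]
      simp
  calc ∑ k : Fin n, (if σ k ∈ S then F (Pset' σ ((k:ℕ)+1)) - F (Pset' σ (k:ℕ)) else 0)
      ≤ ∑ k : Fin n, (F (S ∩ Pset' σ ((k:ℕ)+1)) - F (S ∩ Pset' σ (k:ℕ))) :=
        Finset.sum_le_sum fun k _ => key k
    _ = ∑ m ∈ Finset.range n, (F (S ∩ Pset' σ (m+1)) - F (S ∩ Pset' σ m)) :=
        Fin.sum_univ_eq_sum_range (fun m => F (S ∩ Pset' σ (m+1)) - F (S ∩ Pset' σ m)) n
    _ = F (S ∩ Pset' σ n) - F (S ∩ Pset' σ 0) :=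
        Finset.sum_range_sub (fun m => F (S ∩ Pset' σ m)) n
    _ = F S := by
        rw [Pset'_zero, Pset'_top, Finset.inter_univ, Finset.inter_empty, hF0, sub_zero]

lemma abel_aux (n : ℕ) (c d : ℕ → ℝ) (hd0 : d 0 = 0) (hdn : d n = 0)
    (hdpos : ∀ k, k ≤ n → 0 ≤ d k) (hc : ∀ k, k + 1 < n → c (k + 1) ≤ c k) :
    0 ≤ ∑ k ∈ Finset.range n, c k * (d (k + 1) - d k) := by
  rcases Nat.eq_zero_or_pos n with rfl | hn
  · simp
  have main : ∀ m, 1 ≤ m → m ≤ n →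
      c (m - 1) * d m ≤ ∑ k ∈ Finset.range m, c k * (d (k + 1) - d k) := by
    intro m
    induction m with
    | zero => intro h; omega
    | succ m ih =>
      intro _ hmn
      rcases Nat.eq_zero_or_pos m with rfl | hm
      · simp [hd0]
      · have h1 : m ≤ n := le_of_lt (Nat.lt_of_lt_of_le (Nat.lt_succ_self m) hmn)
        have ihm := ih hm h1
        rw [Finset.sum_range_succ]
        have hcc : c m ≤ c (m - 1) := by
          have := hc (m - 1) (by omega)
          have hm1 : m - 1 + 1 = m := by omega
          rwa [hm1] at this
        have hdm : 0 ≤ d m := hdpos m h1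
        have hmul : c m * d m ≤ c (m - 1) * d m := mul_le_mul_of_nonneg_right hcc hdm
        have hs : Nat.succ m - 1 = m := rfl
        rw [hs]
        nlinarith [ihm]
  have h1 := main n hn le_rfl
  have h2 : c (n - 1) * d n = 0 := by rw [hdn, mul_zero]
  linarith

lemma lovasz_ge_inner {n : ℕ} {F : Finset (Fin n) → ℝ} (hF0 : F ∅ = 0)
    {x y : Fin n → ℝ} {σ : Equiv.Perm (Fin n)} (hσ : SortsDesc x σ)
    (hy : y ∈ basePolytope F) :
    ∑ i, x i * y i ≤ lovaszVal F x σ := by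
  classical
  set d : ℕ → ℝ := fun m => F (Pset' σ m) - ∑ i ∈ Pset' σ m, y i with hd
  set c : ℕ → ℝ := fun m => if h : m < n then x (σ ⟨m, h⟩) else 0 with hc
  have hkey : lovaszVal F x σ - ∑ i, x i * y i
      = ∑ m ∈ Finset.range n, c m * (d (m + 1) - d m) := by
    have h1 : lovaszVal F x σ
        = ∑ k : Fin n, x (σ k) * (F (Pset' σ ((k:ℕ)+1)) - F (Pset' σ (k:ℕ))) := by
      unfold lovaszVal
      refine Finset.sum_congr rfl fun k _ => ?_
      rw [filter_le_eq, filter_lt_eq]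
    have h2 : ∑ i, x i * y i = ∑ k : Fin n, x (σ k) * y (σ k) :=
      (Equiv.sum_comp σ (fun i => x i * y i)).symm
    have h3 : ∀ k : Fin n, y (σ k) = (∑ i ∈ Pset' σ ((k:ℕ)+1), y i) - ∑ i ∈ Pset' σ (k:ℕ), y i := by
      intro k
      rw [Pset'_succ σ k, Finset.sum_insert (notmem_Pset' σ k)]
      ring
    have h4 : ∀ k : Fin n, x (σ k) = c (k : ℕ) := by
      intro k
      simp only [hc, k.isLt, dif_pos, Fin.eta]
    rw [h1, h2, ← Finset.sum_sub_distrib]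
    rw [← Fin.sum_univ_eq_sum_range (fun m => c m * (d (m + 1) - d m)) n]
    refine Finset.sum_congr rfl fun k _ => ?_
    rw [h3 k, ← h4 k]
    simp only [hd]
    ring
  have h0 : 0 ≤ ∑ m ∈ Finset.range n, c m * (d (m + 1) - d m) := by
    apply abel_aux
    · simp [hd, Pset'_zero, hF0]
    · simp [hd, Pset'_top, hy.2]
    · intro k _
      simp only [hd]
      have := hy.1 (Pset' σ k)
      linarith
    · intro k hk
      have hk1 : k < n := by omega
      simp only [hc, dif_pos hk, dif_pos hk1]
      exact hσ ⟨k, hk1⟩ ⟨k + 1, hk⟩ (by simp [Fin.le_def])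
  linarith [hkey, h0]

lemma sortsDesc_exists {n : ℕ} (x : Fin n → ℝ) : ∃ σ : Equiv.Perm (Fin n), SortsDesc x σ := by
  refine ⟨Tuple.sort (fun i => -x i), fun j k hjk => ?_⟩
  have := Tuple.monotone_sort (fun i => -x i) hjk
  simpa using this

/- ### Main theorem -/

/-- proximal problem and projection of the origin onto `B(F)`:
`min_x [f(x) + ½‖x‖²] = max_{y ∈ B(F)} −½‖y‖²`, both optima attained, the
minimizer `x*` is unique, the maximizer `y*` is unique and is the orthogonal
projection of `0` onto the compact convex set `B(F)`, and `x* = −y*`. -/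
theorem statement7 {n : ℕ} (F : Finset (Fin n) → ℝ) (hF0 : F ∅ = 0) (hF : Submodular F)
    (f : (Fin n → ℝ) → ℝ) (hf : IsLovasz F f) :
    ∃ xstar ystar : Fin n → ℝ,
      IsLeast (Set.range (fun x : Fin n → ℝ => f x + (1/2) * ∑ i, (x i)^2))
        (f xstar + (1/2) * ∑ i, (xstar i)^2) ∧
      (∀ x : Fin n → ℝ,
        f x + (1/2) * ∑ i, (x i)^2 = f xstar + (1/2) * ∑ i, (xstar i)^2 → x = xstar) ∧
      ystar ∈ basePolytope F ∧
      IsGreatest ((fun y : Fin n → ℝ => -(1/2) * ∑ i, (y i)^2) '' basePolytope F)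
        (-(1/2) * ∑ i, (ystar i)^2) ∧
      (∀ y ∈ basePolytope F,
        -(1/2) * ∑ i, (y i)^2 = -(1/2) * ∑ i, (ystar i)^2 → y = ystar) ∧
      f xstar + (1/2) * ∑ i, (xstar i)^2 = -(1/2) * ∑ i, (ystar i)^2 ∧
      IsCompact (basePolytope F) ∧ Convex ℝ (basePolytope F) ∧
      (∀ z ∈ basePolytope F, ∑ i, (ystar i)^2 ≤ ∑ i, (z i)^2) ∧
      xstar = -ystar := by
  classical
  -- nonemptiness
  have hne : (basePolytope F).Nonempty := ⟨greedy F 1, greedy_mem_s7 hF0 hF 1⟩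
  -- convexity
  have hconv : Convex ℝ (basePolytope F) := by
    intro y hy z hz a b ha hb hab
    constructor
    · intro S
      have h1 : ∑ i ∈ S, (a • y + b • z) i = a * ∑ i ∈ S, y i + b * ∑ i ∈ S, z i := by
        simp only [Pi.add_apply, Pi.smul_apply, smul_eq_mul]
        rw [Finset.sum_add_distrib, Finset.mul_sum, Finset.mul_sum]
      rw [h1]
      have h2 := mul_le_mul_of_nonneg_left (hy.1 S) ha
      have h3 := mul_le_mul_of_nonneg_left (hz.1 S) hb
      have h4 : a * F S + b * F S = F S := by rw [← add_mul, hab, one_mul]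
      linarith
    · have h1 : ∑ i, (a • y + b • z) i = a * ∑ i, y i + b * ∑ i, z i := by
        simp only [Pi.add_apply, Pi.smul_apply, smul_eq_mul]
        rw [Finset.sum_add_distrib, Finset.mul_sum, Finset.mul_sum]
      rw [h1, hy.2, hz.2, ← add_mul, hab, one_mul]
  -- compactness
  have hclosed : IsClosed (basePolytope F) := by
    have heq : basePolytope F
        = (⋂ S : Finset (Fin n), {y : Fin n → ℝ | ∑ i ∈ S, y i ≤ F S})
          ∩ {y : Fin n → ℝ | ∑ i, y i = F Finset.univ} := by
      ext y
      simp [basePolytope, Set.mem_iInter]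
    rw [heq]
    refine IsClosed.inter (isClosed_iInter fun S => ?_) (isClosed_eq ?_ continuous_const)
    · exact isClosed_le (continuous_finset_sum S fun i _ => continuous_apply i) continuous_const
    · exact continuous_finset_sum _ fun i _ => continuous_apply i
  have hcpt : IsCompact (basePolytope F) := by
    have hsub : basePolytope F ⊆ Set.Icc
        (fun i => F Finset.univ - F (Finset.univ.erase i)) (fun i => F {i}) := by
      intro y hy
      rw [Set.mem_Icc]
      constructor
      · intro i
        have h1 : ∑ j ∈ Finset.univ.erase i, y j + y i = ∑ j, y j :=
          Finset.sum_erase_add Finset.univ y (Finset.mem_univ i)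
        have h2 := hy.1 (Finset.univ.erase i)
        have h3 := hy.2
        simp only
        linarith
      · intro i
        have := hy.1 {i}
        simpa using this
    exact (isCompact_Icc).of_isClosed_subset hclosed hsub
  -- projection of origin
  have hcont : Continuous (fun z : Fin n → ℝ => ∑ i, (z i)^2) :=
    continuous_finset_sum _ fun i _ => (continuous_apply i).pow 2
  obtain ⟨ystar, hymem, hymin'⟩ := hcpt.exists_isMinOn hne hcont.continuousOn
  have hymin : ∀ z ∈ basePolytope F, ∑ i, (ystar i)^2 ≤ ∑ i, (z i)^2 :=
    fun z hz => hymin' hz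
  -- uniqueness of the minimum-norm point
  have huniq : ∀ y ∈ basePolytope F, ∑ i, (y i)^2 = ∑ i, (ystar i)^2 → y = ystar := by
    intro y hy hnorm
    by_contra hne'
    obtain ⟨i0, hi0⟩ : ∃ i, y i ≠ ystar i := by
      by_contra h
      push_neg at h
      exact hne' (funext h)
    have hmid : (1/2 : ℝ) • y + (1/2 : ℝ) • ystar ∈ basePolytope F :=
      hconv hy hymem (by norm_num) (by norm_num) (by norm_num)
    have hptwise : ∀ i, (((1/2 : ℝ) • y + (1/2 : ℝ) • ystar) i)^2
        = (y i)^2/2 + (ystar i)^2/2 - ((y i - ystar i)/2)^2 := by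
      intro i
      simp only [Pi.add_apply, Pi.smul_apply, smul_eq_mul]
      ring
    have hsumm : ∑ i, (((1/2 : ℝ) • y + (1/2 : ℝ) • ystar) i)^2
        = (∑ i, (y i)^2)/2 + (∑ i, (ystar i)^2)/2 - ∑ i, ((y i - ystar i)/2)^2 := by
      rw [Finset.sum_congr rfl fun i _ => hptwise i]
      rw [Finset.sum_sub_distrib, Finset.sum_add_distrib, Finset.sum_div, Finset.sum_div]
    have hpos : 0 < ∑ i, ((y i - ystar i)/2)^2 := by
      apply Finset.sum_pos' (fun i _ => sq_nonneg _)
      refine ⟨i0, Finset.mem_univ i0, ?_⟩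
      have hne0 : y i0 - ystar i0 ≠ 0 := sub_ne_zero.mpr hi0
      positivity
    have := hymin _ hmid
    rw [hsumm, hnorm] at this
    linarith
  -- projection variational inequality
  have hproj : ∀ w ∈ basePolytope F, ∑ i, (ystar i)^2 ≤ ∑ i, ystar i * w i := by
    intro w hw
    by_contra hcon
    push_neg at hcon
    set cc : ℝ := ∑ i, ystar i * (w i - ystar i) with hccdef
    have hcc : cc < 0 := by
      have : cc = ∑ i, ystar i * w i - ∑ i, (ystar i)^2 := by
        rw [hccdef, ← Finset.sum_sub_distrib]
        exact Finset.sum_congr rfl fun i _ => by ring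
      linarith
    set q : ℝ := ∑ i, (w i - ystar i)^2 with hqdef
    have hq0 : 0 ≤ q := Finset.sum_nonneg fun i _ => sq_nonneg _
    have hqpos : 0 < q := by
      rcases lt_or_eq_of_le hq0 with h | h
      · exact h
      · exfalso
        have hz : ∀ i ∈ Finset.univ, (w i - ystar i)^2 = 0 := by
          intro i _
          have := (Finset.sum_eq_zero_iff_of_nonneg (fun i _ => sq_nonneg (w i - ystar i))).mp
            h.symm
          exact this i (Finset.mem_univ i)
        have : cc = 0 := by
          rw [hccdef]
          apply Finset.sum_eq_zero
          intro i _
          have h1 := hz i (Finset.mem_univ i)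
          have h2 : w i - ystar i = 0 := by
            have := sq_eq_zero_iff.mp h1
            exact this
          rw [h2, mul_zero]
        linarith
    set t : ℝ := min 1 (-cc / q) with htdef
    have ht0 : 0 < t := lt_min one_pos (div_pos (by linarith) hqpos)
    have ht1 : t ≤ 1 := min_le_left _ _
    have htq : t * q ≤ -cc := by
      have : t ≤ -cc / q := min_le_right _ _
      calc t * q ≤ (-cc / q) * q := mul_le_mul_of_nonneg_right this hq0
        _ = -cc := by field_simp
    have hpt : (1 - t) • ystar + t • w ∈ basePolytope F :=
      hconv hymem hw (by linarith) (le_of_lt ht0) (by ring)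
    have hsump : ∑ i, (((1 - t) • ystar + t • w) i)^2
        = ∑ i, (ystar i)^2 + 2 * t * cc + t^2 * q := by
      have hterm : ∀ i : Fin n, (((1 - t) • ystar + t • w) i)^2
          = (ystar i)^2 + 2 * t * (ystar i * (w i - ystar i)) + t^2 * ((w i - ystar i)^2) := by
        intro i
        simp only [Pi.add_apply, Pi.smul_apply, smul_eq_mul]
        ring
      rw [Finset.sum_congr rfl fun i _ => hterm i, Finset.sum_add_distrib, Finset.sum_add_distrib,
        ← Finset.mul_sum, ← Finset.mul_sum, hccdef, hqdef]
    have hge := hymin _ hpt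
    rw [hsump] at hge
    have h5 : t^2 * q = t * (t * q) := by ring
    have h6 : t * (t * q) ≤ t * (-cc) := mul_le_mul_of_nonneg_left htq (le_of_lt ht0)
    have h7 : 2 * t * cc + t^2 * q ≤ t * cc := by
      rw [h5]
      nlinarith
    have h8 : t * cc < 0 := mul_neg_of_pos_of_neg ht0 hcc
    linarith
  -- the minimizer
  set xstar : Fin n → ℝ := -ystar with hxdef
  have hxsq : ∑ i, (xstar i)^2 = ∑ i, (ystar i)^2 := by
    refine Finset.sum_congr rfl fun i _ => ?_
    simp [hxdef]
  -- lower bound for all x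
  have hlb : ∀ x : Fin n → ℝ, -(1/2) * ∑ i, (ystar i)^2 ≤ f x + (1/2) * ∑ i, (x i)^2 := by
    intro x
    obtain ⟨σ, hσ⟩ := sortsDesc_exists x
    have h1 : ∑ i, x i * ystar i ≤ f x := by
      rw [hf x σ hσ]
      exact lovasz_ge_inner hF0 hσ hymem
    have h2 : -(1/2) * ∑ i, (ystar i)^2 ≤ ∑ i, x i * ystar i + (1/2) * ∑ i, (x i)^2 := by
      have h3 : ∑ i, x i * ystar i + (1/2) * ∑ i, (x i)^2 + (1/2) * ∑ i, (ystar i)^2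
          = (1/2) * ∑ i, (x i + ystar i)^2 := by
        rw [Finset.mul_sum, Finset.mul_sum, Finset.mul_sum, ← Finset.sum_add_distrib,
          ← Finset.sum_add_distrib]
        refine Finset.sum_congr rfl fun i _ => ?_
        ring
      have h4 : 0 ≤ (1/2 : ℝ) * ∑ i, (x i + ystar i)^2 := by positivity
      linarith
    linarith
  -- value at xstar
  have hval : f xstar = - ∑ i, (ystar i)^2 := by
    obtain ⟨σ, hσ⟩ := sortsDesc_exists xstar
    have hup : f xstar ≤ - ∑ i, (ystar i)^2 := by
      rw [hf xstar σ hσ, lovaszVal_eq_inner_greedy]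
      have hg := greedy_mem_s7 hF0 hF σ
      have h1 := hproj _ hg
      have h2 : ∑ i, xstar i * greedy F σ i = - ∑ i, ystar i * greedy F σ i := by
        rw [← Finset.sum_neg_distrib]
        refine Finset.sum_congr rfl fun i _ => ?_
        simp only [hxdef, Pi.neg_apply]
        ring
      rw [h2]
      linarith
    have hdown : - ∑ i, (ystar i)^2 ≤ f xstar := by
      obtain ⟨σ', hσ'⟩ := sortsDesc_exists xstar
      have h1 : ∑ i, xstar i * ystar i ≤ f xstar := by
        rw [hf xstar σ' hσ']
        exact lovasz_ge_inner hF0 hσ' hymem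
      have h2 : ∑ i, xstar i * ystar i = - ∑ i, (ystar i)^2 := by
        rw [← Finset.sum_neg_distrib]
        refine Finset.sum_congr rfl fun i _ => ?_
        simp only [hxdef, Pi.neg_apply]
        ring
      linarith
    linarith
  have hvaleq : f xstar + (1/2) * ∑ i, (xstar i)^2 = -(1/2) * ∑ i, (ystar i)^2 := by
    rw [hval, hxsq]
    ring
  refine ⟨xstar, ystar, ?_, ?_, hymem, ?_, ?_, hvaleq, hcpt, hconv, hymin, rfl⟩
  · -- IsLeast
    constructor
    · exact ⟨xstar, rfl⟩
    · rintro v ⟨x, rfl⟩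
      rw [hvaleq]
      exact hlb x
  · -- uniqueness of minimizer
    intro x hx
    rw [hvaleq] at hx
    obtain ⟨σ, hσ⟩ := sortsDesc_exists x
    have h1 : ∑ i, x i * ystar i ≤ f x := by
      rw [hf x σ hσ]
      exact lovasz_ge_inner hF0 hσ hymem
    have h3 : ∑ i, x i * ystar i + (1/2) * ∑ i, (x i)^2 + (1/2) * ∑ i, (ystar i)^2
        = (1/2) * ∑ i, (x i + ystar i)^2 := by
      rw [Finset.mul_sum, Finset.mul_sum, Finset.mul_sum, ← Finset.sum_add_distrib,
        ← Finset.sum_add_distrib]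
      refine Finset.sum_congr rfl fun i _ => ?_
      ring
    have h4 : (1/2 : ℝ) * ∑ i, (x i + ystar i)^2 ≤ 0 := by linarith
    have h5 : ∑ i, (x i + ystar i)^2 ≤ 0 := by linarith
    have h6 : ∀ i ∈ Finset.univ, (x i + ystar i)^2 = 0 := by
      intro i _
      have hle : ∑ i, (x i + ystar i)^2 = 0 :=
        le_antisymm h5 (Finset.sum_nonneg fun i _ => sq_nonneg _)
      exact (Finset.sum_eq_zero_iff_of_nonneg (fun i _ => sq_nonneg _)).mp hle i
        (Finset.mem_univ i)
    funext i
    have := sq_eq_zero_iff.mp (h6 i (Finset.mem_univ i))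
    simp only [hxdef, Pi.neg_apply]
    linarith
  · -- IsGreatest
    constructor
    · exact ⟨ystar, hymem, rfl⟩
    · rintro v ⟨y, hy, rfl⟩
      have := hymin y hy
      linarith
  · -- uniqueness of maximizer
    intro y hy hval'
    apply huniq y hy
    linarith
end

section
/- Let f, h : ℝ^n → ℝ be convex (finite-valued) functions and y ∈ ℝ^n. Then (1/2)‖y‖² − min_{x ∈ ℝ^n} [ (1/2)‖x − y‖² + f(x) + h(x) ] = inf_{ν, μ ∈ ℝ^n} [ (1/2)‖ν + μ − y‖² + f*(ν) + h*(μ) ], the infimum on the right is attained at some (ν*, μ*) with f*(ν*) and h*(μ*) finite, and the unique minimizer x* of the left-hand problem satisfies x* = y − ν* − μ*. -/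
open Finset

/-- The Fenchel conjugate of a (finite-valued) function on ℝ^n, with values in
`EReal` (it may take the value `+∞`): `f*(ν) = sup_x (⟨ν, x⟩ − f(x))`. -/
noncomputable def fenchelConj {n : ℕ} (f : (Fin n → ℝ) → ℝ) (v : Fin n → ℝ) : EReal :=
  ⨆ x : Fin n → ℝ, ((∑ i, v i * x i - f x : ℝ) : EReal)

variable {n : ℕ}

private lemma sumsq_nonneg (a : Fin n → ℝ) : 0 ≤ ∑ i, (a i)^2 :=
  Finset.sum_nonneg fun i _ => sq_nonneg _

/-- convexity of a translate -/
private lemma convexOn_translate (f : (Fin n → ℝ) → ℝ)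
    (hf : ConvexOn ℝ (Set.univ : Set (Fin n → ℝ)) f) (c : Fin n → ℝ) :
    ConvexOn ℝ (Set.univ : Set (Fin n → ℝ)) (fun d => f (c + d)) := by
  refine ⟨convex_univ, fun x _ y _ a b ha hb hab => ?_⟩
  have key : c + (a • x + b • y) = a • (c + x) + b • (c + y) := by
    rw [smul_add, smul_add, add_add_add_comm, ← add_smul, hab, one_smul]
  simpa [key] using hf.2 (Set.mem_univ (c + x)) (Set.mem_univ (c + y)) ha hb hab


private lemma exists_subgrad_pair (f g : (Fin n → ℝ) → ℝ)
    (hf : ConvexOn ℝ (Set.univ : Set (Fin n → ℝ)) f)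
    (hg : ConvexOn ℝ (Set.univ : Set (Fin n → ℝ)) g) (xs : Fin n → ℝ)
    (hmin : ∀ x, f xs + g xs ≤ f x + g x) :
    ∃ ν : Fin n → ℝ,
      (∀ x, f xs + ∑ i, ν i * (x i - xs i) ≤ f x) ∧
      (∀ x, g xs - ∑ i, ν i * (x i - xs i) ≤ g x) := by
  classical
  set f1 : (Fin n → ℝ) → ℝ := fun d => f (xs + d) - f xs with hf1def
  set g1 : (Fin n → ℝ) → ℝ := fun d => g xs - g (xs + d) with hg1def
  have hf1 : ConvexOn ℝ (Set.univ : Set (Fin n → ℝ)) f1 := by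
    have := (convexOn_translate f hf xs).sub (concaveOn_const (f xs) convex_univ)
    simpa [f1, Pi.sub_def] using this
  have hg1 : ConcaveOn ℝ (Set.univ : Set (Fin n → ℝ)) g1 := by
    have := (concaveOn_const (g xs) convex_univ).sub (convexOn_translate g hg xs)
    simpa [g1, Pi.sub_def] using this
  set A : Set ((Fin n → ℝ) × ℝ) := {p | f1 p.1 < p.2} with hAdef
  set B : Set ((Fin n → ℝ) × ℝ) := {p | p.2 ≤ g1 p.1} with hBdef
  have hAc : Convex ℝ A := by
    have := hf1.convex_strict_epigraph
    simpa [A, Set.setOf_and] using this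
  have hBc : Convex ℝ B := by
    have := hg1.convex_hypograph
    simpa [B, Set.setOf_and] using this
  have hfc : Continuous f := hf.locallyLipschitz.continuous
  have hAo : IsOpen A := by
    refine isOpen_lt ?_ continuous_snd
    exact (hfc.comp (continuous_const.add continuous_fst)).sub continuous_const
  have hdis : Disjoint A B := by
    rw [Set.disjoint_left]
    rintro ⟨d, t⟩ hA hB
    have h1 : f1 d < t := hA
    have h2 : t ≤ g1 d := hB
    have := hmin (xs + d)
    simp only [f1, g1] at h1 h2
    linarith
  obtain ⟨φ, u, hu1, hu2⟩ := geometric_hahn_banach_open hAc hAo hBc hdis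
  set a : ℝ := φ (0, 1) with hadef
  have hu0 : u ≤ 0 := by
    have h0B : ((0 : Fin n → ℝ), (0:ℝ)) ∈ B := by simp [B, g1]
    have := hu2 _ h0B
    simpa [show ((0 : Fin n → ℝ), (0:ℝ)) = 0 from rfl] using this
  have hεa : ∀ ε : ℝ, 0 < ε → ε * a < u := by
    intro ε hε
    have hmem : ((0 : Fin n → ℝ), ε) ∈ A := by simp [A, f1, hε]
    have := hu1 _ hmem
    have hsm : ((0 : Fin n → ℝ), ε) = ε • ((0 : Fin n → ℝ), (1:ℝ)) := by
      simp [Prod.ext_iff]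
    rw [hsm, map_smul, smul_eq_mul] at this
    exact this
  have hu0' : 0 ≤ u := by
    by_contra hc
    push_neg at hc
    have ha0 : a < 0 := by have := hεa 1 one_pos; linarith
    have hεpos : 0 < u / (2 * a) := div_pos_of_neg_of_neg hc (by linarith)
    have := hεa _ hεpos
    have heq : u / (2 * a) * a = u / 2 := by
      rw [div_mul_eq_mul_div, mul_comm u a, mul_comm 2 a, mul_div_mul_left _ _ ha0.ne]
    rw [heq] at this
    linarith
  have huz : u = 0 := le_antisymm hu0 hu0'
  have ha : a < 0 := by have := hεa 1 one_pos; rw [huz] at this; linarith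
  set ψ : (Fin n → ℝ) → ℝ := fun d => φ (d, 0) with hψdef
  have hφ : ∀ (d : Fin n → ℝ) (t : ℝ), φ (d, t) = ψ d + t * a := by
    intro d t
    have hsplit : ((d, t) : (Fin n → ℝ) × ℝ) = (d, 0) + t • ((0 : Fin n → ℝ), (1:ℝ)) := by
      simp [Prod.ext_iff]
    rw [hsplit, map_add, map_smul, smul_eq_mul]
  have key1 : ∀ d : Fin n → ℝ, ψ d + (f (xs + d) - f xs) * a ≤ 0 := by
    intro d
    by_contra hc
    push_neg at hc
    set c : ℝ := ψ d + (f (xs + d) - f xs) * a with hcdef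
    have hεA : ∀ ε : ℝ, 0 < ε → ψ d + (f (xs + d) - f xs + ε) * a < 0 := by
      intro ε hε
      have hmem : ((d, f (xs + d) - f xs + ε) : (Fin n → ℝ) × ℝ) ∈ A := by
        simp only [A, Set.mem_setOf_eq, f1]
        linarith
      have := hu1 _ hmem
      rw [hφ, huz] at this
      exact this
    have hεp : 0 < c / (-a) := div_pos hc (by linarith)
    have h2 := hεA _ hεp
    have heq : c / (-a) * a = -c := by
      rw [div_neg, neg_mul, div_mul_cancel₀ _ ha.ne]
    nlinarith [h2, heq]
  have key2 : ∀ d : Fin n → ℝ, 0 ≤ ψ d + (g xs - g (xs + d)) * a := by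
    intro d
    have hmem : ((d, g1 d) : (Fin n → ℝ) × ℝ) ∈ B := by simp [B]
    have := hu2 _ hmem
    rw [hφ, huz] at this
    simpa [g1] using this
  set ν : Fin n → ℝ := fun i => ψ (Pi.single i 1) / (-a) with hνdef
  have hψlin : ∀ d : Fin n → ℝ, ψ d = ∑ i, d i * ψ (Pi.single i 1) := by
    intro d
    have hd : ((d, (0:ℝ)) : (Fin n → ℝ) × ℝ)
        = ∑ i, d i • (((Pi.single i 1 : Fin n → ℝ)), (0:ℝ)) := by
      have h1 : ∑ i, d i • (((Pi.single i 1 : Fin n → ℝ)), (0:ℝ))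
          = (∑ i, Pi.single i (d i), 0) := by
        rw [Prod.ext_iff]
        constructor
        · rw [Prod.fst_sum]
          refine Finset.sum_congr rfl fun i _ => ?_
          simp [← Pi.single_smul]
        · rw [Prod.snd_sum]
          simp
      rw [h1, Finset.univ_sum_single]
    calc ψ d = φ (d, 0) := rfl
      _ = φ (∑ i, d i • (((Pi.single i 1 : Fin n → ℝ)), (0:ℝ))) := by rw [← hd]
      _ = ∑ i, d i * ψ (Pi.single i 1) := by
          rw [map_sum]
          exact Finset.sum_congr rfl fun i _ => by rw [map_smul, smul_eq_mul]
  have hL : ∀ x : Fin n → ℝ, ∑ i, ν i * (x i - xs i) = ψ (x - xs) / (-a) := by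
    intro x
    rw [hψlin (x - xs), Finset.sum_div]
    refine Finset.sum_congr rfl fun i _ => ?_
    simp only [ν, Pi.sub_apply]
    ring
  refine ⟨ν, fun x => ?_, fun x => ?_⟩
  · have h1 := key1 (x - xs)
    rw [add_sub_cancel] at h1
    have h2 : ψ (x - xs) / (-a) ≤ f x - f xs := by
      rw [div_le_iff₀ (by linarith : (0:ℝ) < -a)]
      nlinarith [h1]
    rw [hL]
    linarith
  · have h1 := key2 (x - xs)
    rw [add_sub_cancel] at h1
    have h2 : g xs - g x ≤ ψ (x - xs) / (-a) := by
      rw [le_div_iff₀ (by linarith : (0:ℝ) < -a)]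
      nlinarith [h1]
    rw [hL]
    linarith

private lemma exists_argmin (G : (Fin n → ℝ) → ℝ)
    (hG : ConvexOn ℝ (Set.univ : Set (Fin n → ℝ)) G) (y : Fin n → ℝ) :
    ∃ xs : Fin n → ℝ, ∀ x : Fin n → ℝ,
      (1/2) * ∑ i, (xs i - y i)^2 + G xs ≤ (1/2) * ∑ i, (x i - y i)^2 + G x := by
  classical
  set F : (Fin n → ℝ) → ℝ := fun x => (1/2) * ∑ i, (x i - y i)^2 + G x with hFdef
  have hGc : Continuous G := hG.locallyLipschitz.continuous
  have hQc : Continuous fun x : Fin n → ℝ => ∑ i, (x i - y i)^2 :=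
    continuous_finset_sum _ fun i _ => ((continuous_apply i).sub continuous_const).pow 2
  have hFc : Continuous F := ((continuous_const.mul hQc).add hGc)
  set S : Set (Fin n → ℝ) := {u | ∑ i, (u i)^2 = 1} with hSdef
  have hScompact : IsCompact S := by
    refine (isCompact_closedBall (0 : Fin n → ℝ) 1).of_isClosed_subset
      (isClosed_eq (continuous_finset_sum _ fun i _ => (continuous_apply i).pow 2)
        continuous_const) ?_
    intro u hu
    rw [Metric.mem_closedBall, dist_zero_right]
    refine (pi_norm_le_iff_of_nonneg zero_le_one).2 fun i => ?_
    have h1 : (u i)^2 ≤ 1 := by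
      have := Finset.single_le_sum (f := fun j => (u j)^2)
        (fun j _ => sq_nonneg _) (Finset.mem_univ i)
      rw [hu] at this
      exact this
    rw [Real.norm_eq_abs]
    nlinarith [abs_nonneg (u i), sq_abs (u i)]
  have hbdd : BddBelow ((fun u => G (y + u) - G y) '' S) :=
    (hScompact.image ((hGc.comp (continuous_const.add continuous_id)).sub
      continuous_const)).bddBelow
  obtain ⟨c, hc⟩ := hbdd
  set M : ℝ := max 1 (-c) with hMdef
  have hM1 : (1:ℝ) ≤ M := le_max_left _ _
  have hM : ∀ u ∈ S, G y - M ≤ G (y + u) := by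
    intro u hu
    have h1 : c ≤ G (y + u) - G y := hc ⟨u, hu, rfl⟩
    have h2 : -M ≤ c := by
      have := le_max_right 1 (-c)
      linarith
    linarith
  set R : ℝ := 2 * M + 1 with hRdef
  set K : Set (Fin n → ℝ) := {x | ∑ i, (x i - y i)^2 ≤ R^2} with hKdef
  have hKcompact : IsCompact K := by
    refine (isCompact_closedBall y R).of_isClosed_subset
      (isClosed_le hQc continuous_const) ?_
    intro x hx
    rw [Metric.mem_closedBall, dist_eq_norm]
    refine (pi_norm_le_iff_of_nonneg (by linarith : (0:ℝ) ≤ R)).2 fun i => ?_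
    have h1 : (x i - y i)^2 ≤ R^2 := by
      have := Finset.single_le_sum (f := fun j => (x j - y j)^2)
        (fun j _ => sq_nonneg _) (Finset.mem_univ i)
      exact this.trans hx
    rw [Pi.sub_apply, Real.norm_eq_abs]
    nlinarith [abs_nonneg (x i - y i), sq_abs (x i - y i)]
  have hyK : y ∈ K := by
    simp only [K, Set.mem_setOf_eq]
    have : ∀ i : Fin n, (y i - y i)^2 = 0 := fun i => by ring
    rw [Finset.sum_congr rfl fun i _ => this i]
    simp only [Finset.sum_const_zero]
    positivity
  obtain ⟨xs, hxsK, hxsmin⟩ := hKcompact.exists_isMinOn ⟨y, hyK⟩ hFc.continuousOn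
  refine ⟨xs, fun x => ?_⟩
  by_cases hx : x ∈ K
  · exact hxsmin hx
  · have hFyxs : F xs ≤ F y := hxsmin hyK
    have hQ : R^2 < ∑ i, (x i - y i)^2 := by
      simp only [K, Set.mem_setOf_eq, not_le] at hx
      exact hx
    set t : ℝ := Real.sqrt (∑ i, (x i - y i)^2) with htdef
    have ht2 : t^2 = ∑ i, (x i - y i)^2 := Real.sq_sqrt (sumsq_nonneg _)
    have htnn : 0 ≤ t := Real.sqrt_nonneg _
    have htR : R < t := by nlinarith [hM1]
    have ht1 : 1 ≤ t := by nlinarith [hM1]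
    have htpos : 0 < t := by linarith
    set u : Fin n → ℝ := fun i => (x i - y i) / t with hudef
    have huS : u ∈ S := by
      simp only [S, Set.mem_setOf_eq, u]
      rw [Finset.sum_congr rfl fun i _ => div_pow (x i - y i) t 2, ← Finset.sum_div, ← ht2]
      field_simp
    have hcomb : (1 - 1/t) • y + (1/t) • x = y + u := by
      funext i
      simp only [Pi.add_apply, Pi.smul_apply, smul_eq_mul, u]
      field_simp
      ring
    have ha' : (0:ℝ) ≤ 1 - 1/t := by
      have h5 : 1/t ≤ 1 := by
        rw [div_le_one htpos]
        exact ht1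
      linarith
    have hb' : (0:ℝ) ≤ 1/t := by positivity
    have hab' : (1 - 1/t) + 1/t = 1 := by ring
    have hconv := hG.2 (Set.mem_univ y) (Set.mem_univ x) ha' hb' hab'
    rw [hcomb] at hconv
    simp only [smul_eq_mul] at hconv
    have hMu := hM u huS
    have h3 : t * G (y + u) ≤ (t - 1) * G y + G x := by
      have h6 := mul_le_mul_of_nonneg_left hconv htnn
      have heq : t * ((1 - 1/t) * G y + (1/t) * G x) = (t - 1) * G y + G x := by
        field_simp
      rw [heq] at h6
      exact h6
    have hGx : G y - t * M ≤ G x := by nlinarith [hMu]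
    have hy0 : ∑ i, (y i - y i)^2 = 0 := by
      rw [Finset.sum_congr rfl (fun i _ => show (y i - y i)^2 = 0 by ring)]
      simp
    have hFx : F y ≤ F x := by
      simp only [F, hy0]
      rw [← ht2]
      nlinarith [hGx, hM1, htR]
    show F xs ≤ F x
    linarith

private lemma quad_shift (h : (Fin n → ℝ) → ℝ)
    (hh : ConvexOn ℝ (Set.univ : Set (Fin n → ℝ)) h) (y xs ν : Fin n → ℝ)
    (hsub : ∀ x, (1/2) * ∑ i, (xs i - y i)^2 + h xs - ∑ i, ν i * (x i - xs i)
      ≤ (1/2) * ∑ i, (x i - y i)^2 + h x) :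
    ∀ x, h xs + ∑ i, (y i - xs i - ν i) * (x i - xs i) ≤ h x := by
  intro x
  set Qd : ℝ := ∑ i, (x i - xs i)^2 with hQd
  set D : ℝ := ∑ i, (y i - xs i - ν i) * (x i - xs i) with hDdef
  set Sxy : ℝ := ∑ i, (xs i - y i) * (x i - xs i) with hSxy
  set Sν : ℝ := ∑ i, ν i * (x i - xs i) with hSν
  have hD : D = -Sxy - Sν := by
    rw [hDdef, hSxy, hSν, ← Finset.sum_neg_distrib, ← Finset.sum_sub_distrib]
    exact Finset.sum_congr rfl fun i _ => by ring
  have key : ∀ t : ℝ, 0 < t → t ≤ 1 → D ≤ (h x - h xs) + t * Qd / 2 := by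
    intro t ht0 ht1
    set xt : Fin n → ℝ := (1 - t) • xs + t • x with hxt
    have hxti : ∀ i, xt i = xs i + t * (x i - xs i) := by
      intro i
      simp only [xt, Pi.add_apply, Pi.smul_apply, smul_eq_mul]
      ring
    have hconv := hh.2 (Set.mem_univ xs) (Set.mem_univ x)
      (by linarith : (0:ℝ) ≤ 1 - t) ht0.le (by ring)
    rw [← hxt] at hconv
    simp only [smul_eq_mul] at hconv
    have hexp : ∑ i, (xt i - y i)^2
        = ∑ i, (xs i - y i)^2 + t * (2 * Sxy) + t^2 * Qd := by
      rw [hSxy, hQd, Finset.mul_sum, Finset.mul_sum, Finset.mul_sum,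
        ← Finset.sum_add_distrib, ← Finset.sum_add_distrib]
      exact Finset.sum_congr rfl fun i _ => by rw [hxti i]; ring
    have hSνt : ∑ i, ν i * (xt i - xs i) = t * Sν := by
      rw [hSν, Finset.mul_sum]
      exact Finset.sum_congr rfl fun i _ => by rw [hxti i]; ring
    have H := hsub xt
    rw [hexp, hSνt] at H
    have goal' : t * D ≤ t * ((h x - h xs) + t * Qd / 2) := by
      rw [hD]
      nlinarith [H, hconv]
    exact le_of_mul_le_mul_left goal' ht0
  by_contra hcon
  push_neg at hcon
  set δ : ℝ := D - (h x - h xs) with hδ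
  have hδpos : 0 < δ := by simp only [hδ]; linarith
  have hQdnn : (0:ℝ) ≤ Qd := sumsq_nonneg _
  set t : ℝ := min 1 (δ / (Qd + 1)) with htd
  have ht0 : 0 < t := lt_min one_pos (div_pos hδpos (by linarith))
  have ht1 : t ≤ 1 := min_le_left _ _
  have htq : t * (Qd + 1) ≤ δ := by
    have h1 : t ≤ δ / (Qd + 1) := min_le_right _ _
    have h2 : t * (Qd + 1) ≤ (δ / (Qd + 1)) * (Qd + 1) := by
      apply mul_le_mul_of_nonneg_right h1
      linarith
    rwa [div_mul_cancel₀ _ (by linarith : Qd + 1 ≠ 0)] at h2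
  have h3 := key t ht0 ht1
  have h4 : t * Qd < δ := by nlinarith
  linarith

theorem statement8' {n : ℕ} (f h : (Fin n → ℝ) → ℝ)
    (hf : ConvexOn ℝ (Set.univ : Set (Fin n → ℝ)) f)
    (hh : ConvexOn ℝ (Set.univ : Set (Fin n → ℝ)) h)
    (y : Fin n → ℝ) :
    ∃ xstar ν μ : Fin n → ℝ,
      IsLeast (Set.range (fun x : Fin n → ℝ =>
        (1/2) * ∑ i, (x i - y i)^2 + f x + h x))
        ((1/2) * ∑ i, (xstar i - y i)^2 + f xstar + h xstar) ∧
      (∀ x : Fin n → ℝ,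
        (1/2) * ∑ i, (x i - y i)^2 + f x + h x
          = (1/2) * ∑ i, (xstar i - y i)^2 + f xstar + h xstar → x = xstar) ∧
      fenchelConj f ν ≠ ⊤ ∧ fenchelConj h μ ≠ ⊤ ∧
      ((((1/2) * ∑ i, (ν i + μ i - y i)^2 : ℝ) : EReal) + fenchelConj f ν + fenchelConj h μ
        = (((1/2) * ∑ i, (y i)^2
            - ((1/2) * ∑ i, (xstar i - y i)^2 + f xstar + h xstar) : ℝ) : EReal)) ∧
      (∀ ν' μ' : Fin n → ℝ,
        (((1/2) * ∑ i, (ν i + μ i - y i)^2 : ℝ) : EReal) + fenchelConj f ν + fenchelConj h μ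
          ≤ (((1/2) * ∑ i, (ν' i + μ' i - y i)^2 : ℝ) : EReal)
              + fenchelConj f ν' + fenchelConj h μ') ∧
      xstar = y - ν - μ := by
  classical
  -- the primal minimizer
  obtain ⟨xs, hmin0⟩ := exists_argmin (fun x => f x + h x) (hf.add hh) y
  have hmin : ∀ x, (1/2) * ∑ i, (xs i - y i)^2 + f xs + h xs
      ≤ (1/2) * ∑ i, (x i - y i)^2 + f x + h x := by
    intro x
    have := hmin0 x
    linarith
  -- convexity of the quadratic
  have hquad : ConvexOn ℝ (Set.univ : Set (Fin n → ℝ))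
      (fun x => (1/2) * ∑ i, (x i - y i)^2) := by
    refine ⟨convex_univ, fun p _ q _ a b ha hb hab => ?_⟩
    simp only [Pi.add_apply, Pi.smul_apply, smul_eq_mul]
    have h1 : ∀ i : Fin n, (a * p i + b * q i - y i)^2
        ≤ a * (p i - y i)^2 + b * (q i - y i)^2 := by
      intro i
      have hb1 : b = 1 - a := by linarith
      subst hb1
      nlinarith [mul_nonneg ha hb, sq_nonneg (p i - q i), sq_nonneg (p i - q i)]
    calc (1/2) * ∑ i, (a * p i + b * q i - y i)^2
        ≤ (1/2) * ∑ i, (a * (p i - y i)^2 + b * (q i - y i)^2) := by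
          have := Finset.sum_le_sum fun i (_ : i ∈ Finset.univ) => h1 i
          linarith
      _ = a * ((1/2) * ∑ i, (p i - y i)^2) + b * ((1/2) * ∑ i, (q i - y i)^2) := by
          rw [Finset.sum_add_distrib, ← Finset.mul_sum, ← Finset.mul_sum]
          ring
  have hg : ConvexOn ℝ (Set.univ : Set (Fin n → ℝ))
      (fun x => (1/2) * ∑ i, (x i - y i)^2 + h x) := hquad.add hh
  -- separation: subgradient pair
  obtain ⟨ν0, hν1, hν2⟩ := exists_subgrad_pair f
    (fun x => (1/2) * ∑ i, (x i - y i)^2 + h x) hf hg xs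
    (fun x => by have := hmin x; linarith)
  -- subgradient of h at xs
  have hμ0 : ∀ x, h xs + ∑ i, (y i - xs i - ν0 i) * (x i - xs i) ≤ h x := by
    refine quad_shift h hh y xs ν0 (fun x => ?_) 
    have := hν2 x
    linarith
  set μ : Fin n → ℝ := y - xs - ν0 with hμdef
  have hμi : ∀ i, μ i = y i - xs i - ν0 i := fun i => by simp [hμdef]
  have hμ : ∀ x, h xs + ∑ i, μ i * (x i - xs i) ≤ h x := by
    intro x
    have := hμ0 x
    rw [Finset.sum_congr rfl fun i (_ : i ∈ Finset.univ) =>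
      show μ i * (x i - xs i) = (y i - xs i - ν0 i) * (x i - xs i) by rw [hμi i]]
    linarith
  -- conjugate values
  have hsplitν : ∀ x : Fin n → ℝ, ∑ i, ν0 i * (x i - xs i)
      = ∑ i, ν0 i * x i - ∑ i, ν0 i * xs i := by
    intro x
    rw [← Finset.sum_sub_distrib]
    exact Finset.sum_congr rfl fun i _ => by ring
  have hsplitμ : ∀ x : Fin n → ℝ, ∑ i, μ i * (x i - xs i)
      = ∑ i, μ i * x i - ∑ i, μ i * xs i := by
    intro x
    rw [← Finset.sum_sub_distrib]
    exact Finset.sum_congr rfl fun i _ => by ring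
  have hfconj : fenchelConj f ν0 = ((∑ i, ν0 i * xs i - f xs : ℝ) : EReal) := by
    unfold fenchelConj
    apply le_antisymm
    · refine iSup_le fun x => ?_
      rw [EReal.coe_le_coe_iff]
      have h1 := hν1 x
      rw [hsplitν x] at h1
      linarith
    · exact le_iSup (fun x : Fin n → ℝ => ((∑ i, ν0 i * x i - f x : ℝ) : EReal)) xs
  have hhconj : fenchelConj h μ = ((∑ i, μ i * xs i - h xs : ℝ) : EReal) := by
    unfold fenchelConj
    apply le_antisymm
    · refine iSup_le fun x => ?_
      rw [EReal.coe_le_coe_iff]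
      have h1 := hμ x
      rw [hsplitμ x] at h1
      linarith
    · exact le_iSup (fun x : Fin n → ℝ => ((∑ i, μ i * x i - h x : ℝ) : EReal)) xs
  -- general lower bound for conjugates
  have hlow : ∀ (φ : (Fin n → ℝ) → ℝ) (v : Fin n → ℝ),
      ((∑ i, v i * xs i - φ xs : ℝ) : EReal) ≤ fenchelConj φ v := by
    intro φ v
    exact le_iSup (fun x : Fin n → ℝ => ((∑ i, v i * x i - φ x : ℝ) : EReal)) xs
  -- the duality equality
  have hνμy : ∀ i, ν0 i + μ i - y i = -xs i := fun i => by rw [hμi i]; ring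
  have hqeq : (1/2) * ∑ i, (ν0 i + μ i - y i)^2 = (1/2) * ∑ i, (xs i)^2 := by
    congr 1
    exact Finset.sum_congr rfl fun i _ => by rw [hνμy i]; ring
  have heq : (((1/2) * ∑ i, (ν0 i + μ i - y i)^2 : ℝ) : EReal)
      + fenchelConj f ν0 + fenchelConj h μ
      = (((1/2) * ∑ i, (y i)^2
          - ((1/2) * ∑ i, (xs i - y i)^2 + f xs + h xs) : ℝ) : EReal) := by
    rw [hfconj, hhconj, ← EReal.coe_add, ← EReal.coe_add, EReal.coe_eq_coe_iff, hqeq]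
    have hkey : (1/2) * ∑ i, (xs i)^2 + ∑ i, ν0 i * xs i + ∑ i, μ i * xs i
        = (1/2) * ∑ i, (y i)^2 - (1/2) * ∑ i, (xs i - y i)^2 := by
      rw [Finset.mul_sum, Finset.mul_sum, Finset.mul_sum, ← Finset.sum_add_distrib,
        ← Finset.sum_add_distrib, ← Finset.sum_sub_distrib]
      exact Finset.sum_congr rfl fun i _ => by rw [hμi i]; ring
    linarith
  refine ⟨xs, ν0, μ, ?_, ?_, ?_, ?_, heq, ?_, ?_⟩
  · exact ⟨⟨xs, rfl⟩, by rintro v ⟨x, rfl⟩; exact hmin x⟩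
  · -- uniqueness
    intro x hx
    set m : Fin n → ℝ := (1/2 : ℝ) • x + (1/2 : ℝ) • xs with hm
    have hfm := hf.2 (Set.mem_univ x) (Set.mem_univ xs)
      (by norm_num : (0:ℝ) ≤ 1/2) (by norm_num : (0:ℝ) ≤ 1/2) (by norm_num)
    have hhm := hh.2 (Set.mem_univ x) (Set.mem_univ xs)
      (by norm_num : (0:ℝ) ≤ 1/2) (by norm_num : (0:ℝ) ≤ 1/2) (by norm_num)
    rw [← hm] at hfm hhm
    simp only [smul_eq_mul] at hfm hhm
    have hmi : ∀ i, m i = (1/2) * x i + (1/2) * xs i := fun i => by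
      simp [hm, Pi.add_apply, Pi.smul_apply]
    have hqm : (1/2) * ∑ i, (m i - y i)^2 + (1/8) * ∑ i, (x i - xs i)^2
        = (1/4) * ∑ i, (x i - y i)^2 + (1/4) * ∑ i, (xs i - y i)^2 := by
      rw [Finset.mul_sum, Finset.mul_sum, Finset.mul_sum, Finset.mul_sum,
        ← Finset.sum_add_distrib, ← Finset.sum_add_distrib]
      exact Finset.sum_congr rfl fun i _ => by rw [hmi i]; ring
    have hminm := hmin m
    have hQ0 : ∑ i, (x i - xs i)^2 ≤ 0 := by linarith
    have hQ0' : ∑ i, (x i - xs i)^2 = 0 := le_antisymm hQ0 (sumsq_nonneg _)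
    funext i
    have := (Finset.sum_eq_zero_iff_of_nonneg
      (fun j (_ : j ∈ Finset.univ) => sq_nonneg (x j - xs j))).1 hQ0' i (Finset.mem_univ i)
    have := pow_eq_zero_iff (n := 2) (by norm_num) |>.1 this
    linarith [this]
  · rw [hfconj]; exact EReal.coe_ne_top _
  · rw [hhconj]; exact EReal.coe_ne_top _
  · -- weak duality
    intro ν' μ'
    rw [heq]
    by_cases h1 : fenchelConj f ν' = ⊤
    · have hb : fenchelConj h μ' ≠ ⊥ :=
        ((EReal.bot_lt_coe _).trans_le (hlow h μ')).ne'
      rw [h1, EReal.coe_add_top, EReal.top_add_of_ne_bot hb]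
      exact le_top
    by_cases h2 : fenchelConj h μ' = ⊤
    · have hb : (((1/2) * ∑ i, (ν' i + μ' i - y i)^2 : ℝ) : EReal) + fenchelConj f ν' ≠ ⊥ := by
        refine ne_bot_of_gt (lt_of_lt_of_le
          (EReal.bot_lt_coe ((1/2) * ∑ i, (ν' i + μ' i - y i)^2
            + (∑ i, ν' i * xs i - f xs))) ?_)
        rw [EReal.coe_add]
        exact add_le_add_right (hlow f ν') _
      rw [h2, EReal.add_top_of_ne_bot hb]
      exact le_top
    · have hb1 : fenchelConj f ν' ≠ ⊥ :=
        ((EReal.bot_lt_coe _).trans_le (hlow f ν')).ne'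
      have hb2 : fenchelConj h μ' ≠ ⊥ :=
        ((EReal.bot_lt_coe _).trans_le (hlow h μ')).ne'
      rw [← EReal.coe_toReal h1 hb1, ← EReal.coe_toReal h2 hb2,
        ← EReal.coe_add, ← EReal.coe_add, EReal.coe_le_coe_iff]
      have hr1 : ∑ i, ν' i * xs i - f xs ≤ (fenchelConj f ν').toReal := by
        rw [← EReal.coe_le_coe_iff, EReal.coe_toReal h1 hb1]
        exact hlow f ν'
      have hr2 : ∑ i, μ' i * xs i - h xs ≤ (fenchelConj h μ').toReal := by
        rw [← EReal.coe_le_coe_iff, EReal.coe_toReal h2 hb2]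
        exact hlow h μ'
      have hkey : (1/2) * ∑ i, (ν' i + μ' i - y i)^2 + ∑ i, ν' i * xs i
          + ∑ i, μ' i * xs i + (1/2) * ∑ i, (xs i - y i)^2 - (1/2) * ∑ i, (y i)^2
          = (1/2) * ∑ i, (ν' i + μ' i + xs i - y i)^2 := by
        rw [Finset.mul_sum, Finset.mul_sum, Finset.mul_sum, Finset.mul_sum,
          ← Finset.sum_add_distrib, ← Finset.sum_add_distrib, ← Finset.sum_add_distrib,
          ← Finset.sum_sub_distrib]
        exact Finset.sum_congr rfl fun i _ => by ring
      have hnn := sumsq_nonneg (fun i => ν' i + μ' i + xs i - y i)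
      linarith
  · funext i
    simp only [Pi.sub_apply, hμi i]
    ring

/-- BCD on the dual = proximal-Dykstra; strong duality for
`min_x ½‖x − y‖² + f(x) + h(x)`:
`½‖y‖² − min_x [½‖x−y‖² + f(x) + h(x)] = inf_{ν,μ} [½‖ν+μ−y‖² + f*(ν) + h*(μ)]`,
the infimum is attained at some `(ν*, μ*)` with finite conjugate values, and the
unique primal minimizer satisfies `x* = y − ν* − μ*`. -/
theorem statement8 {n : ℕ} (f h : (Fin n → ℝ) → ℝ)
    (hf : ConvexOn ℝ (Set.univ : Set (Fin n → ℝ)) f)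
    (hh : ConvexOn ℝ (Set.univ : Set (Fin n → ℝ)) h)
    (y : Fin n → ℝ) :
    ∃ xstar ν μ : Fin n → ℝ,
      IsLeast (Set.range (fun x : Fin n → ℝ =>
        (1/2) * ∑ i, (x i - y i)^2 + f x + h x))
        ((1/2) * ∑ i, (xstar i - y i)^2 + f xstar + h xstar) ∧
      (∀ x : Fin n → ℝ,
        (1/2) * ∑ i, (x i - y i)^2 + f x + h x
          = (1/2) * ∑ i, (xstar i - y i)^2 + f xstar + h xstar → x = xstar) ∧
      fenchelConj f ν ≠ ⊤ ∧ fenchelConj h μ ≠ ⊤ ∧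
      ((((1/2) * ∑ i, (ν i + μ i - y i)^2 : ℝ) : EReal) + fenchelConj f ν + fenchelConj h μ
        = (((1/2) * ∑ i, (y i)^2
            - ((1/2) * ∑ i, (xstar i - y i)^2 + f xstar + h xstar) : ℝ) : EReal)) ∧
      (∀ ν' μ' : Fin n → ℝ,
        (((1/2) * ∑ i, (ν i + μ i - y i)^2 : ℝ) : EReal) + fenchelConj f ν + fenchelConj h μ
          ≤ (((1/2) * ∑ i, (ν' i + μ' i - y i)^2 : ℝ) : EReal)
              + fenchelConj f ν' + fenchelConj h μ') ∧
      xstar = y - ν - μ :=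
  statement8' f h hf hh y
end
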